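/- arXiv:0911.5585 — 4 statements merged into one kernel-verified Lean document; each statement's English description precedes it below -/
import Mathlib

section
/- Let H be a Hopf algebra over ℂ and let I₁, I₂ be Hopf ideals of H such that I₁ ∩ I₂ does not contain any non-zero Hopf ideal. Assume that for k = 1, 2 the quotient Hopf algebra H/Iₖ is inner linear, i.e. there exists a two-sided ideal Kₖ of H with Iₖ ⊆ Kₖ and dim_ℂ(H/Kₖ) < ∞ such that every Hopf ideal J of H with J ⊆ Kₖ satisfies J ⊆ Iₖ. Then H is inner linear. -/
open scoped TensorProduct

section Defs

variable {H : Type*} [Ring H] [HopfAlgebra ℂ H]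

/-- The subspace `P ⊗ Q` of `H ⊗ H`. -/
noncomputable def subTensor (P Q : Submodule ℂ H) : Submodule ℂ (H ⊗[ℂ] H) :=
  LinearMap.range (TensorProduct.map P.subtype Q.subtype)

/-- A two-sided ideal (as a `ℂ`-subspace closed under left and right multiplication). -/
structure IsTwoSidedIdealSub (I : Submodule ℂ H) : Prop where
  mul_mem_left : ∀ (x : H) ⦃a : H⦄, a ∈ I → x * a ∈ I
  mul_mem_right : ∀ ⦃a : H⦄ (x : H), a ∈ I → a * x ∈ I

/-- A Hopf ideal: a two-sided ideal `I` with `ε(I) = 0`, `Δ(I) ⊆ I⊗H + H⊗I` and `S(I) ⊆ I`. -/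
structure IsHopfIdeal (I : Submodule ℂ H) extends IsTwoSidedIdealSub I : Prop where
  counit_eq_zero : ∀ a ∈ I, Coalgebra.counit (R := ℂ) a = 0
  comul_mem : ∀ a ∈ I, Coalgebra.comul (R := ℂ) a ∈ subTensor I ⊤ ⊔ subTensor ⊤ I
  antipode_mem : ∀ a ∈ I, HopfAlgebra.antipode (R := ℂ) a ∈ I

/-- Inner faithfulness of an algebra representation: the kernel contains no nonzero Hopf ideal. -/
def InnerFaithful {A : Type*} [Semiring A] [Algebra ℂ A] (π : H →ₐ[ℂ] A) : Prop :=
  ∀ J : Submodule ℂ H, IsHopfIdeal J → (∀ x ∈ J, π x = 0) → J = ⊥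

/-- Inner linearity: there is a two-sided ideal of finite codimension containing no nonzero
Hopf ideal. -/
def InnerLinear (H : Type*) [Ring H] [HopfAlgebra ℂ H] : Prop :=
  ∃ I : Submodule ℂ H, IsTwoSidedIdealSub I ∧ FiniteDimensional ℂ (H ⧸ I) ∧
    ∀ J : Submodule ℂ H, IsHopfIdeal J → J ≤ I → J = ⊥

end Defs

theorem stmt2 (H : Type*) [Ring H] [HopfAlgebra ℂ H]
    (I₁ I₂ : Submodule ℂ H) (hI₁ : IsHopfIdeal I₁) (hI₂ : IsHopfIdeal I₂)
    (hmin : ∀ J : Submodule ℂ H, IsHopfIdeal J → J ≤ I₁ ⊓ I₂ → J = ⊥)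
    (K₁ : Submodule ℂ H) (hK₁ : IsTwoSidedIdealSub K₁) (hIK₁ : I₁ ≤ K₁)
    (hfd₁ : FiniteDimensional ℂ (H ⧸ K₁))
    (hfa₁ : ∀ J : Submodule ℂ H, IsHopfIdeal J → J ≤ K₁ → J ≤ I₁)
    (K₂ : Submodule ℂ H) (hK₂ : IsTwoSidedIdealSub K₂) (hIK₂ : I₂ ≤ K₂)
    (hfd₂ : FiniteDimensional ℂ (H ⧸ K₂))
    (hfa₂ : ∀ J : Submodule ℂ H, IsHopfIdeal J → J ≤ K₂ → J ≤ I₂) :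
    InnerLinear H := by
  refine ⟨K₁ ⊓ K₂, ⟨fun x a ha => ⟨hK₁.mul_mem_left x ha.1, hK₂.mul_mem_left x ha.2⟩,
    fun a x ha => ⟨hK₁.mul_mem_right x ha.1, hK₂.mul_mem_right x ha.2⟩⟩, ?_, ?_⟩
  · -- finite codimension: embed H⧸(K₁⊓K₂) into (H⧸K₁) × (H⧸K₂)
    let f : H →ₗ[ℂ] (H ⧸ K₁) × (H ⧸ K₂) := (K₁.mkQ).prod (K₂.mkQ)
    have hker : K₁ ⊓ K₂ ≤ LinearMap.ker f := by
      intro x hx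
      simp only [f, LinearMap.mem_ker, LinearMap.prod_apply, Function.prod, Prod.mk_eq_zero]
      exact ⟨(Submodule.Quotient.mk_eq_zero K₁).2 hx.1,
        (Submodule.Quotient.mk_eq_zero K₂).2 hx.2⟩
    let g : (H ⧸ (K₁ ⊓ K₂)) →ₗ[ℂ] (H ⧸ K₁) × (H ⧸ K₂) := (K₁ ⊓ K₂).liftQ f hker
    have hg : Function.Injective g := by
      rw [← LinearMap.ker_eq_bot, Submodule.ker_liftQ_eq_bot]
      intro x hx
      simp only [f, LinearMap.mem_ker, LinearMap.prod_apply, Function.prod, Prod.mk_eq_zero] at hx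
      exact ⟨(Submodule.Quotient.mk_eq_zero K₁).1 hx.1,
        (Submodule.Quotient.mk_eq_zero K₂).1 hx.2⟩
    exact FiniteDimensional.of_injective g hg
  · intro J hJ hle
    exact hmin J hJ (le_inf (hfa₁ J hJ (hle.trans inf_le_left))
      (hfa₂ J hJ (hle.trans inf_le_right)))
end

section
/- Let H be a Hopf algebra over ℂ and let I₁, I₂ be Hopf ideals of H. Assume that the algebra map θ : H → H/I₁ ⊗ H/I₂, x ↦ (π₁⊗π₂)(Δ(x)) (π₁, π₂ the canonical projections), is injective; equivalently, every x ∈ H with Δ(x) ∈ I₁⊗H + H⊗I₂ is zero. Assume moreover that for k = 1, 2 the quotient Hopf algebra H/Iₖ is inner linear, i.e. there exists a two-sided ideal Kₖ of H with Iₖ ⊆ Kₖ and dim_ℂ(H/Kₖ) < ∞ such that every Hopf ideal J of H with J ⊆ Kₖ satisfies J ⊆ Iₖ. Then H is inner linear. -/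
open scoped TensorProduct

lemma subTensor_mono {H : Type*} [Ring H] [HopfAlgebra ℂ H]
    {P P' Q Q' : Submodule ℂ H} (hP : P ≤ P') (hQ : Q ≤ Q') :
    subTensor P Q ≤ subTensor P' Q' := by
  have h1 : P.subtype = P'.subtype ∘ₗ Submodule.inclusion hP := rfl
  have h2 : Q.subtype = Q'.subtype ∘ₗ Submodule.inclusion hQ := rfl
  rw [subTensor, h1, h2, TensorProduct.map_comp]
  exact (LinearMap.range_comp_le_range _ _)

theorem stmt3 (H : Type*) [Ring H] [HopfAlgebra ℂ H]
    (I₁ I₂ : Submodule ℂ H) (hI₁ : IsHopfIdeal I₁) (hI₂ : IsHopfIdeal I₂)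
    (hinj : ∀ x : H, Coalgebra.comul (R := ℂ) x ∈ subTensor I₁ ⊤ ⊔ subTensor ⊤ I₂ → x = 0)
    (K₁ : Submodule ℂ H) (hK₁ : IsTwoSidedIdealSub K₁) (hIK₁ : I₁ ≤ K₁)
    (hfd₁ : FiniteDimensional ℂ (H ⧸ K₁))
    (hfa₁ : ∀ J : Submodule ℂ H, IsHopfIdeal J → J ≤ K₁ → J ≤ I₁)
    (K₂ : Submodule ℂ H) (hK₂ : IsTwoSidedIdealSub K₂) (hIK₂ : I₂ ≤ K₂)
    (hfd₂ : FiniteDimensional ℂ (H ⧸ K₂))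
    (hfa₂ : ∀ J : Submodule ℂ H, IsHopfIdeal J → J ≤ K₂ → J ≤ I₂) :
    InnerLinear H := by
  refine ⟨K₁ ⊓ K₂, ⟨fun x a ha => ⟨hK₁.mul_mem_left x ha.1, hK₂.mul_mem_left x ha.2⟩,
    fun a x ha => ⟨hK₁.mul_mem_right x ha.1, hK₂.mul_mem_right x ha.2⟩⟩, ?_, ?_⟩
  · have hker : LinearMap.ker (LinearMap.prod K₁.mkQ K₂.mkQ) = K₁ ⊓ K₂ := by
      rw [LinearMap.ker_prod, Submodule.ker_mkQ, Submodule.ker_mkQ]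
    have hinj' : Function.Injective ((K₁ ⊓ K₂).liftQ (LinearMap.prod K₁.mkQ K₂.mkQ) hker.ge) := by
      rw [← LinearMap.ker_eq_bot]
      exact Submodule.ker_liftQ_eq_bot _ _ _ hker.le
    exact FiniteDimensional.of_injective _ hinj'
  · intro J hJ hle
    have h1 : J ≤ I₁ := hfa₁ J hJ (hle.trans inf_le_left)
    have h2 : J ≤ I₂ := hfa₂ J hJ (hle.trans inf_le_right)
    rw [Submodule.eq_bot_iff]
    intro x hx
    refine hinj x ?_
    have := hJ.comul_mem x hx
    exact sup_le_sup (subTensor_mono h1 le_rfl) (subTensor_mono le_rfl h2) this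
end

section
/- Let H be a Hopf algebra over ℂ having a regular antipode. Then the following are equivalent: (1) H is inner linear; (2) there exists an algebra homomorphism π : H → A into a finite-dimensional ℂ-algebra A such that Ker(π) does not contain any non-zero Hopf ideal I with S(I) = I. -/
open scoped TensorProduct

section Regular

variable {H : Type*} [Ring H] [HopfAlgebra ℂ H]

/-- `x ↦ Σ φ(x₍₁₎) x₍₂₎`. -/
noncomputable def lconv (φ : H →ₗ[ℂ] ℂ) : H →ₗ[ℂ] H :=
  (TensorProduct.lid ℂ H).toLinearMap ∘ₗ TensorProduct.map φ LinearMap.id ∘ₗ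
    Coalgebra.comul (R := ℂ)

/-- `x ↦ Σ x₍₁₎ ψ(x₍₂₎)`. -/
noncomputable def rconv (ψ : H →ₗ[ℂ] ℂ) : H →ₗ[ℂ] H :=
  (TensorProduct.rid ℂ H).toLinearMap ∘ₗ TensorProduct.map LinearMap.id ψ ∘ₗ
    Coalgebra.comul (R := ℂ)

/-- The convolution `Φ * id_H * Φ⁻¹ : x ↦ Σ Φ(x₍₁₎) x₍₂₎ Φ⁻¹(x₍₃₎)`,
where `Φ⁻¹ = Φ ∘ S`. -/
noncomputable def convConj (Φ : H →ₐ[ℂ] ℂ) : H →ₗ[ℂ] H :=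
  rconv (Φ.toLinearMap ∘ₗ HopfAlgebra.antipode (R := ℂ)) ∘ₗ lconv Φ.toLinearMap

/-- A group-like element: `Δ(a) = a ⊗ a` and `ε(a) = 1`. -/
def IsGroupLikeElemHopf (a : H) : Prop :=
  Coalgebra.comul (R := ℂ) a = a ⊗ₜ[ℂ] a ∧ Coalgebra.counit (R := ℂ) a = 1

/-- `H` has a regular antipode: there are a group-like `a ∈ H` (with `a⁻¹ = S(a)`), a character
`Φ : H → ℂ` and `m ≥ 1` with `S^{2m}(x) = a (Φ * id * Φ⁻¹)(x) a⁻¹` for all `x`. -/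
def HasRegularAntipode (H : Type*) [Ring H] [HopfAlgebra ℂ H] : Prop :=
  ∃ (a : H) (Φ : H →ₐ[ℂ] ℂ) (m : ℕ), 1 ≤ m ∧ IsGroupLikeElemHopf a ∧
    ∀ x : H, (⇑(HopfAlgebra.antipode (R := ℂ) (A := H)))^[2 * m] x =
      a * convConj Φ x * HopfAlgebra.antipode (R := ℂ) a

end Regular

/-- A finite-dimensional representation whose kernel contains no nonzero `S`-stable Hopf
ideal. -/
structure SStableInnerFaithfulFinDimRep (H : Type*) [Ring H] [HopfAlgebra ℂ H] where
  A : Type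
  [ring : Ring A]
  [alg : Algebra ℂ A]
  findim : FiniteDimensional ℂ A
  π : H →ₐ[ℂ] A
  faithful : ∀ J : Submodule ℂ H, IsHopfIdeal J →
    Submodule.map (HopfAlgebra.antipode (R := ℂ)) J = J → (∀ x ∈ J, π x = 0) → J = ⊥


namespace Stmt8Aux
open Coalgebra HopfAlgebra TensorProduct LinearMap

variable {H : Type*} [Ring H] [HopfAlgebra ℂ H]

noncomputable def μ3 (B : Type*) [Ring B] [Algebra ℂ B] :
    B ⊗[ℂ] (B ⊗[ℂ] B) →ₗ[ℂ] B :=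
  LinearMap.mul' ℂ B ∘ₗ LinearMap.lTensor B (LinearMap.mul' ℂ B)

@[simp] lemma μ3_tmul {B : Type*} [Ring B] [Algebra ℂ B] (u v w : B) :
    μ3 B (u ⊗ₜ (v ⊗ₜ w)) = u * (v * w) := by
  simp [μ3]

lemma sum_counit_smul_right {x : H} (r : Coalgebra.Repr ℂ x (H × H)) :
    ∑ i ∈ r.index, Coalgebra.counit (R := ℂ) (r.left i) • r.right i = x := by
  have h2 := congrArg (TensorProduct.lid ℂ H) (Coalgebra.sum_counit_tmul_eq (R := ℂ) r)
  rw [map_sum] at h2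
  simp only [TensorProduct.lid_tmul] at h2
  simpa using h2

lemma sum_smul_counit_left {x : H} (r : Coalgebra.Repr ℂ x (H × H)) :
    ∑ i ∈ r.index, Coalgebra.counit (R := ℂ) (r.right i) • r.left i = x := by
  have h2 := congrArg (TensorProduct.rid ℂ H) (Coalgebra.sum_tmul_counit_eq (R := ℂ) r)
  rw [map_sum] at h2
  simp only [TensorProduct.rid_tmul] at h2
  simpa using h2

lemma counit_antipode' (x : H) :
    Coalgebra.counit (R := ℂ) (HopfAlgebra.antipode (R := ℂ) x) = Coalgebra.counit (R := ℂ) x := by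
  have r := Coalgebra.Repr.arbitrary ℂ x
  have h := congrArg (Coalgebra.counit (R := ℂ)) (sum_antipode_mul_eq_algebraMap_counit (R := ℂ) r)
  rw [map_sum] at h
  simp only [Bialgebra.counit_mul] at h
  have hx : Coalgebra.counit (R := ℂ) (HopfAlgebra.antipode (R := ℂ) x)
      = ∑ i ∈ r.index, Coalgebra.counit (R := ℂ) (HopfAlgebra.antipode (R := ℂ) (r.left i)) *
          Coalgebra.counit (R := ℂ) (r.right i) := by
    conv_lhs => rw [← sum_smul_counit_left r]
    rw [map_sum, map_sum]
    simp [mul_comm, smul_eq_mul]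
  rw [hx, h]
  simp

lemma inner_collapse (u v : H) (pu : Coalgebra.Repr ℂ u (H × H)) (pv : Coalgebra.Repr ℂ v (H × H)) :
      (∑ k ∈ pu.index, ∑ l ∈ pv.index,
        HopfAlgebra.antipode (R := ℂ) (pu.left k * pv.left l) * (pu.right k * pv.right l))
      = (Coalgebra.counit (R := ℂ) u * Coalgebra.counit (R := ℂ) v) • (1 : H) := by
  have h := mul_antipode_rTensor_comul_apply (R := ℂ) (u * v)
  rw [Bialgebra.comul_mul, ← pu.eq, ← pv.eq, Finset.sum_mul_sum] at h
  simp only [Algebra.TensorProduct.tmul_mul_tmul] at h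
  simp only [map_sum, LinearMap.rTensor_tmul, LinearMap.mul'_apply] at h
  rw [h, Bialgebra.counit_mul, Algebra.algebraMap_eq_smul_one]

lemma antipode_mul' (a b : H) :
    HopfAlgebra.antipode (R := ℂ) (a * b)
      = HopfAlgebra.antipode (R := ℂ) b * HopfAlgebra.antipode (R := ℂ) a := by
  classical
  have ra := Coalgebra.Repr.arbitrary ℂ a
  have rb := Coalgebra.Repr.arbitrary ℂ b
  have pa : ∀ i, Coalgebra.Repr ℂ (ra.left i) (H × H) := fun i => Coalgebra.Repr.arbitrary ℂ _
  have qa : ∀ i, Coalgebra.Repr ℂ (ra.right i) (H × H) := fun i => Coalgebra.Repr.arbitrary ℂ _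
  have pb : ∀ j, Coalgebra.Repr ℂ (rb.left j) (H × H) := fun j => Coalgebra.Repr.arbitrary ℂ _
  have qb : ∀ j, Coalgebra.Repr ℂ (rb.right j) (H × H) := fun j => Coalgebra.Repr.arbitrary ℂ _
  -- Claim 1 : S (a * b) = E
  have claim1 : HopfAlgebra.antipode (R := ℂ) (a * b)
      = ∑ i ∈ ra.index, ∑ k ∈ (pa i).index, ∑ j ∈ rb.index, ∑ l ∈ (pb j).index,
          HopfAlgebra.antipode (R := ℂ) ((pa i).left k * (pb j).left l) *
            (((pa i).right k * (pb j).right l) *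
              (HopfAlgebra.antipode (R := ℂ) (rb.right j) *
                HopfAlgebra.antipode (R := ℂ) (ra.right i))) := by
    -- step (b-collapse): for fixed i k
    have stepb : ∀ (i : ra.ι) (k : (pa i).ι),
        (∑ j ∈ rb.index, ∑ l ∈ (pb j).index,
          HopfAlgebra.antipode (R := ℂ) ((pa i).left k * (pb j).left l) *
            (((pa i).right k * (pb j).right l) *
              (HopfAlgebra.antipode (R := ℂ) (rb.right j) *
                HopfAlgebra.antipode (R := ℂ) (ra.right i))))
        = HopfAlgebra.antipode (R := ℂ) ((pa i).left k * b) *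
            ((pa i).right k * HopfAlgebra.antipode (R := ℂ) (ra.right i)) := by
      intro i k
      have hb := Coalgebra.sum_map_tmul_tmul_eq (R := ℂ)
        ((HopfAlgebra.antipode (R := ℂ)) ∘ₗ LinearMap.mulLeft ℂ ((pa i).left k))
        (LinearMap.mulLeft ℂ ((pa i).right k))
        ((LinearMap.mulRight ℂ (HopfAlgebra.antipode (R := ℂ) (ra.right i))) ∘ₗ
          (HopfAlgebra.antipode (R := ℂ))) b (repr := rb) (a₁ := pb) (a₂ := qb)
      have hb2 := congrArg (μ3 H) hb
      rw [map_sum, map_sum] at hb2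
      simp only [map_sum, μ3_tmul, LinearMap.comp_apply, LinearMap.mulLeft_apply,
        LinearMap.mulRight_apply] at hb2
      have e1 : ∀ j ∈ rb.index,
          (∑ l ∈ (qb j).index,
            HopfAlgebra.antipode (R := ℂ) ((pa i).left k * rb.left j) *
              ((pa i).right k * (qb j).left l *
                (HopfAlgebra.antipode (R := ℂ) ((qb j).right l) *
                  HopfAlgebra.antipode (R := ℂ) (ra.right i))))
          = Coalgebra.counit (R := ℂ) (rb.right j) •
              (HopfAlgebra.antipode (R := ℂ) ((pa i).left k * rb.left j) *
                ((pa i).right k * HopfAlgebra.antipode (R := ℂ) (ra.right i))) := by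
        intro j _
        have hq := sum_mul_antipode_eq_algebraMap_counit (R := ℂ) (qb j)
        have e2 : (∑ l ∈ (qb j).index,
              HopfAlgebra.antipode (R := ℂ) ((pa i).left k * rb.left j) *
                ((pa i).right k * (qb j).left l *
                  (HopfAlgebra.antipode (R := ℂ) ((qb j).right l) *
                    HopfAlgebra.antipode (R := ℂ) (ra.right i))))
            = HopfAlgebra.antipode (R := ℂ) ((pa i).left k * rb.left j) *
                ((pa i).right k * ((∑ l ∈ (qb j).index,
                  (qb j).left l * HopfAlgebra.antipode (R := ℂ) ((qb j).right l)) *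
                    HopfAlgebra.antipode (R := ℂ) (ra.right i))) := by
          rw [Finset.sum_mul, Finset.mul_sum, Finset.mul_sum]
          exact Finset.sum_congr rfl fun l _ => by simp only [mul_assoc]
        rw [e2, hq, Algebra.algebraMap_eq_smul_one, smul_mul_assoc, one_mul,
          mul_smul_comm, mul_smul_comm]
      rw [Finset.sum_congr rfl e1] at hb2
      have e4 : (∑ j ∈ rb.index, Coalgebra.counit (R := ℂ) (rb.right j) •
            ((pa i).left k * rb.left j)) = (pa i).left k * b := by
        conv_rhs => rw [← sum_smul_counit_left rb]
        rw [Finset.mul_sum]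
        exact Finset.sum_congr rfl fun j _ => (mul_smul_comm _ _ _).symm
      have e3 : (∑ j ∈ rb.index,
          Coalgebra.counit (R := ℂ) (rb.right j) •
            (HopfAlgebra.antipode (R := ℂ) ((pa i).left k * rb.left j) *
              ((pa i).right k * HopfAlgebra.antipode (R := ℂ) (ra.right i))))
          = HopfAlgebra.antipode (R := ℂ) ((pa i).left k * b) *
              ((pa i).right k * HopfAlgebra.antipode (R := ℂ) (ra.right i)) := by
        have e5 : HopfAlgebra.antipode (R := ℂ) ((pa i).left k * b) =
            ∑ j ∈ rb.index, Coalgebra.counit (R := ℂ) (rb.right j) •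
              HopfAlgebra.antipode (R := ℂ) ((pa i).left k * rb.left j) := by
          conv_lhs => rw [← e4]
          rw [map_sum]
          exact Finset.sum_congr rfl fun j _ => map_smul _ _ _
        rw [e5, Finset.sum_mul]
        exact Finset.sum_congr rfl fun j _ => (smul_mul_assoc _ _ _).symm
      rw [e3] at hb2
      exact hb2.symm
    rw [show HopfAlgebra.antipode (R := ℂ) (a * b) =
        ∑ i ∈ ra.index, ∑ k ∈ (pa i).index,
          HopfAlgebra.antipode (R := ℂ) ((pa i).left k * b) *
            ((pa i).right k * HopfAlgebra.antipode (R := ℂ) (ra.right i)) from ?_]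
    · exact Finset.sum_congr rfl fun i _ => Finset.sum_congr rfl fun k _ => (stepb i k).symm
    · have ha := Coalgebra.sum_map_tmul_tmul_eq (R := ℂ)
        ((HopfAlgebra.antipode (R := ℂ)) ∘ₗ LinearMap.mulRight ℂ b)
        (LinearMap.id (R := ℂ) (M := H)) (HopfAlgebra.antipode (R := ℂ)) a
        (repr := ra) (a₁ := pa) (a₂ := qa)
      have ha2 := congrArg (μ3 H) ha
      rw [map_sum, map_sum] at ha2
      simp only [map_sum, μ3_tmul, LinearMap.comp_apply, LinearMap.mulRight_apply,
        LinearMap.id_coe, id_eq] at ha2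
      rw [← ha2]
      have f1 : ∀ i ∈ ra.index,
          (∑ k ∈ (qa i).index,
            HopfAlgebra.antipode (R := ℂ) (ra.left i * b) *
              ((qa i).left k * HopfAlgebra.antipode (R := ℂ) ((qa i).right k)))
          = Coalgebra.counit (R := ℂ) (ra.right i) •
              HopfAlgebra.antipode (R := ℂ) (ra.left i * b) := by
        intro i _
        rw [← Finset.mul_sum, sum_mul_antipode_eq_algebraMap_counit (R := ℂ) (qa i),
          Algebra.algebraMap_eq_smul_one, mul_smul_comm, mul_one]
      rw [Finset.sum_congr rfl f1]
      have f2 : (∑ i ∈ ra.index, Coalgebra.counit (R := ℂ) (ra.right i) •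
            HopfAlgebra.antipode (R := ℂ) (ra.left i * b))
          = HopfAlgebra.antipode (R := ℂ) (a * b) := by
        have f3 : (∑ i ∈ ra.index, Coalgebra.counit (R := ℂ) (ra.right i) • (ra.left i * b))
            = a * b := by
          rw [show (∑ i ∈ ra.index, Coalgebra.counit (R := ℂ) (ra.right i) • (ra.left i * b))
              = (∑ i ∈ ra.index, Coalgebra.counit (R := ℂ) (ra.right i) • ra.left i) * b by
            rw [Finset.sum_mul]
            exact Finset.sum_congr rfl fun i _ => (smul_mul_assoc _ _ _).symm]
          rw [sum_smul_counit_left ra]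
        conv_rhs => rw [← f3]
        rw [map_sum]
        exact Finset.sum_congr rfl fun i _ => (map_smul _ _ _).symm
      rw [f2]
  -- Claim 2 : E = S b * S a
  have claim2 : (∑ i ∈ ra.index, ∑ k ∈ (pa i).index, ∑ j ∈ rb.index, ∑ l ∈ (pb j).index,
          HopfAlgebra.antipode (R := ℂ) ((pa i).left k * (pb j).left l) *
            (((pa i).right k * (pb j).right l) *
              (HopfAlgebra.antipode (R := ℂ) (rb.right j) *
                HopfAlgebra.antipode (R := ℂ) (ra.right i))))
      = HopfAlgebra.antipode (R := ℂ) b * HopfAlgebra.antipode (R := ℂ) a := by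
    have swap : ∀ i ∈ ra.index,
        (∑ k ∈ (pa i).index, ∑ j ∈ rb.index, ∑ l ∈ (pb j).index,
          HopfAlgebra.antipode (R := ℂ) ((pa i).left k * (pb j).left l) *
            (((pa i).right k * (pb j).right l) *
              (HopfAlgebra.antipode (R := ℂ) (rb.right j) *
                HopfAlgebra.antipode (R := ℂ) (ra.right i))))
        = ∑ j ∈ rb.index,
            (Coalgebra.counit (R := ℂ) (ra.left i) * Coalgebra.counit (R := ℂ) (rb.left j)) •
              (HopfAlgebra.antipode (R := ℂ) (rb.right j) *
                HopfAlgebra.antipode (R := ℂ) (ra.right i)) := by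
      intro i _
      rw [Finset.sum_comm]
      refine Finset.sum_congr rfl fun j _ => ?_
      rw [show (∑ k ∈ (pa i).index, ∑ l ∈ (pb j).index,
          HopfAlgebra.antipode (R := ℂ) ((pa i).left k * (pb j).left l) *
            (((pa i).right k * (pb j).right l) *
              (HopfAlgebra.antipode (R := ℂ) (rb.right j) *
                HopfAlgebra.antipode (R := ℂ) (ra.right i))))
          = (∑ k ∈ (pa i).index, ∑ l ∈ (pb j).index,
              HopfAlgebra.antipode (R := ℂ) ((pa i).left k * (pb j).left l) *
                ((pa i).right k * (pb j).right l)) *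
              (HopfAlgebra.antipode (R := ℂ) (rb.right j) *
                HopfAlgebra.antipode (R := ℂ) (ra.right i)) by
        rw [Finset.sum_mul]
        refine Finset.sum_congr rfl fun k _ => ?_
        rw [Finset.sum_mul]
        exact Finset.sum_congr rfl fun l _ => (mul_assoc _ _ _).symm]
      rw [inner_collapse (ra.left i) (rb.left j) (pa i) (pb j), smul_mul_assoc, one_mul]
    rw [Finset.sum_congr rfl swap]
    have hSb : HopfAlgebra.antipode (R := ℂ) b
        = ∑ j ∈ rb.index, Coalgebra.counit (R := ℂ) (rb.left j) •
            HopfAlgebra.antipode (R := ℂ) (rb.right j) := by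
      conv_lhs => rw [← sum_counit_smul_right rb]
      rw [map_sum]
      exact Finset.sum_congr rfl fun j _ => map_smul _ _ _
    have hSa : HopfAlgebra.antipode (R := ℂ) a
        = ∑ i ∈ ra.index, Coalgebra.counit (R := ℂ) (ra.left i) •
            HopfAlgebra.antipode (R := ℂ) (ra.right i) := by
      conv_lhs => rw [← sum_counit_smul_right ra]
      rw [map_sum]
      exact Finset.sum_congr rfl fun i _ => map_smul _ _ _
    rw [hSb, hSa, Finset.sum_mul_sum, Finset.sum_comm]
    refine Finset.sum_congr rfl fun i _ => Finset.sum_congr rfl fun j _ => ?_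
    rw [smul_mul_assoc, mul_smul_comm, smul_smul, mul_comm]
  rw [claim1, claim2]


noncomputable def Gop : H →ₗ[ℂ] H ⊗[ℂ] H :=
  TensorProduct.map (HopfAlgebra.antipode (R := ℂ)) (HopfAlgebra.antipode (R := ℂ)) ∘ₗ
    (TensorProduct.comm ℂ H H).toLinearMap ∘ₗ Coalgebra.comul (R := ℂ)

lemma Gop_apply {y : H} (ry : Coalgebra.Repr ℂ y (H × H)) :
    Gop y = ∑ j ∈ ry.index,
      HopfAlgebra.antipode (R := ℂ) (ry.right j) ⊗ₜ[ℂ] HopfAlgebra.antipode (R := ℂ) (ry.left j) := by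
  rw [Gop]
  simp only [LinearMap.comp_apply, ← ry.eq, map_sum, LinearEquiv.coe_coe,
    TensorProduct.comm_tmul, TensorProduct.map_tmul]

lemma claimII (y : H) (ry : Coalgebra.Repr ℂ y (H × H)) :
    (∑ i ∈ ry.index,
      Coalgebra.comul (R := ℂ) (HopfAlgebra.antipode (R := ℂ) (ry.left i)) *
        Coalgebra.comul (R := ℂ) (ry.right i))
    = Coalgebra.counit (R := ℂ) y • (1 : H ⊗[ℂ] H) := by
  have h1 : (∑ i ∈ ry.index,
      Coalgebra.comul (R := ℂ) (HopfAlgebra.antipode (R := ℂ) (ry.left i)) *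
        Coalgebra.comul (R := ℂ) (ry.right i))
      = Coalgebra.comul (R := ℂ)
          (∑ i ∈ ry.index, HopfAlgebra.antipode (R := ℂ) (ry.left i) * ry.right i) := by
    rw [map_sum]
    exact Finset.sum_congr rfl fun i _ => (Bialgebra.comul_mul _ _).symm
  rw [h1, sum_antipode_mul_eq_algebraMap_counit (R := ℂ) ry, Bialgebra.comul_algebraMap,
    Algebra.algebraMap_eq_smul_one]

lemma claimI (y : H) (ry : Coalgebra.Repr ℂ y (H × H)) :
    (∑ i ∈ ry.index, Coalgebra.comul (R := ℂ) (ry.left i) * Gop (ry.right i))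
    = Coalgebra.counit (R := ℂ) y • (1 : H ⊗[ℂ] H) := by
  classical
  have p : ∀ i, Coalgebra.Repr ℂ (ry.left i) (H × H) := fun i => Coalgebra.Repr.arbitrary ℂ _
  have c : ∀ i, Coalgebra.Repr ℂ (ry.right i) (H × H) := fun i => Coalgebra.Repr.arbitrary ℂ _
  -- Step 1: reassociate the outer comultiplication
  set Ξ : H ⊗[ℂ] (H ⊗[ℂ] H) →ₗ[ℂ] H ⊗[ℂ] H :=
    LinearMap.mul' ℂ (H ⊗[ℂ] H) ∘ₗ (LinearMap.lTensor (H ⊗[ℂ] H) Gop) ∘ₗ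
      ((TensorProduct.assoc ℂ H H H).symm.toLinearMap) with hΞ
  have Ξ_tmul : ∀ (u v w : H), Ξ (u ⊗ₜ (v ⊗ₜ w)) = (u ⊗ₜ[ℂ] v) * Gop w := by
    intro u v w
    simp [hΞ]
  have h0 := Coalgebra.sum_tmul_tmul_eq (R := ℂ) ry p c
  have h1 := congrArg Ξ h0
  rw [map_sum, map_sum] at h1
  simp only [map_sum, Ξ_tmul] at h1
  have h2 : (∑ i ∈ ry.index, ∑ k ∈ (p i).index,
      ((p i).left k ⊗ₜ[ℂ] (p i).right k) * Gop (ry.right i))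
      = ∑ i ∈ ry.index, Coalgebra.comul (R := ℂ) (ry.left i) * Gop (ry.right i) := by
    refine Finset.sum_congr rfl fun i _ => ?_
    rw [← Finset.sum_mul, (p i).eq]
  rw [h2] at h1
  rw [h1]
  -- Step 2: per-i inner reassociation and collapse
  have step2 : ∀ i ∈ ry.index,
      (∑ j ∈ (c i).index, (ry.left i ⊗ₜ[ℂ] (c i).left j) * Gop ((c i).right j))
      = (ry.left i * HopfAlgebra.antipode (R := ℂ) (ry.right i)) ⊗ₜ[ℂ] (1 : H) := by
    intro i _
    have d : ∀ j, Coalgebra.Repr ℂ ((c i).left j) (H × H) := fun j => Coalgebra.Repr.arbitrary ℂ _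
    have e : ∀ j, Coalgebra.Repr ℂ ((c i).right j) (H × H) := fun j => Coalgebra.Repr.arbitrary ℂ _
    set κ : H ⊗[ℂ] (H ⊗[ℂ] H) →ₗ[ℂ] H ⊗[ℂ] H :=
      TensorProduct.map
        ((LinearMap.mulLeft ℂ (ry.left i)) ∘ₗ (HopfAlgebra.antipode (R := ℂ)))
        ((LinearMap.mul' ℂ H) ∘ₗ LinearMap.lTensor H (HopfAlgebra.antipode (R := ℂ))) ∘ₗ
        (TensorProduct.comm ℂ (H ⊗[ℂ] H) H).toLinearMap ∘ₗ
        ((TensorProduct.assoc ℂ H H H).symm.toLinearMap) with hκ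
    have κ_tmul : ∀ (u v w : H), κ (u ⊗ₜ (v ⊗ₜ w))
        = (ry.left i * HopfAlgebra.antipode (R := ℂ) w) ⊗ₜ[ℂ]
            (u * HopfAlgebra.antipode (R := ℂ) v) := by
      intro u v w
      simp [hκ]
    have g0 := Coalgebra.sum_tmul_tmul_eq (R := ℂ) (c i) d e
    have g1 := congrArg κ g0
    rw [map_sum, map_sum] at g1
    simp only [map_sum, κ_tmul] at g1
    -- RHS of g1 matches our sum
    have g2 : (∑ j ∈ (c i).index, ∑ k ∈ (e j).index,
        (ry.left i * HopfAlgebra.antipode (R := ℂ) ((e j).right k)) ⊗ₜ[ℂ]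
          ((c i).left j * HopfAlgebra.antipode (R := ℂ) ((e j).left k)))
        = ∑ j ∈ (c i).index, (ry.left i ⊗ₜ[ℂ] (c i).left j) * Gop ((c i).right j) := by
      refine Finset.sum_congr rfl fun j _ => ?_
      rw [Gop_apply (e j), Finset.mul_sum]
      refine Finset.sum_congr rfl fun k _ => ?_
      rw [Algebra.TensorProduct.tmul_mul_tmul]
    rw [g2] at g1
    rw [← g1]
    -- LHS of g1 collapses
    have g3 : ∀ j ∈ (c i).index,
        (∑ k ∈ (d j).index,
          (ry.left i * HopfAlgebra.antipode (R := ℂ) ((c i).right j)) ⊗ₜ[ℂ]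
            ((d j).left k * HopfAlgebra.antipode (R := ℂ) ((d j).right k)))
        = Coalgebra.counit (R := ℂ) ((c i).left j) •
            ((ry.left i * HopfAlgebra.antipode (R := ℂ) ((c i).right j)) ⊗ₜ[ℂ] (1 : H)) := by
      intro j _
      rw [← TensorProduct.tmul_sum, sum_mul_antipode_eq_algebraMap_counit (R := ℂ) (d j),
        Algebra.algebraMap_eq_smul_one, TensorProduct.tmul_smul]
    rw [Finset.sum_congr rfl g3]
    have g4 : (∑ j ∈ (c i).index, Coalgebra.counit (R := ℂ) ((c i).left j) •
        ((ry.left i * HopfAlgebra.antipode (R := ℂ) ((c i).right j)) ⊗ₜ[ℂ] (1 : H)))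
        = (∑ j ∈ (c i).index, Coalgebra.counit (R := ℂ) ((c i).left j) •
            (ry.left i * HopfAlgebra.antipode (R := ℂ) ((c i).right j))) ⊗ₜ[ℂ] (1 : H) := by
      rw [TensorProduct.sum_tmul]
      exact Finset.sum_congr rfl fun j _ => rfl
    rw [g4]
    congr 1
    have g5 : (∑ j ∈ (c i).index, Coalgebra.counit (R := ℂ) ((c i).left j) •
        (ry.left i * HopfAlgebra.antipode (R := ℂ) ((c i).right j)))
        = ry.left i * HopfAlgebra.antipode (R := ℂ)
            (∑ j ∈ (c i).index, Coalgebra.counit (R := ℂ) ((c i).left j) • (c i).right j) := by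
      rw [map_sum, Finset.mul_sum]
      refine Finset.sum_congr rfl fun j _ => ?_
      rw [map_smul, mul_smul_comm]
    rw [g5, sum_counit_smul_right (c i)]
  rw [Finset.sum_congr rfl step2]
  have final : (∑ i ∈ ry.index,
      (ry.left i * HopfAlgebra.antipode (R := ℂ) (ry.right i)) ⊗ₜ[ℂ] (1 : H))
      = Coalgebra.counit (R := ℂ) y • (1 : H ⊗[ℂ] H) := by
    rw [← TensorProduct.sum_tmul, sum_mul_antipode_eq_algebraMap_counit (R := ℂ) ry,
      Algebra.algebraMap_eq_smul_one, Algebra.TensorProduct.one_def]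
    rw [TensorProduct.smul_tmul']
  exact final

lemma comul_antipode' (x : H) :
    Coalgebra.comul (R := ℂ) (HopfAlgebra.antipode (R := ℂ) x)
      = TensorProduct.map (HopfAlgebra.antipode (R := ℂ)) (HopfAlgebra.antipode (R := ℂ))
          (TensorProduct.comm ℂ H H (Coalgebra.comul (R := ℂ) x)) := by
  classical
  have r := Coalgebra.Repr.arbitrary ℂ x
  have p : ∀ i, Coalgebra.Repr ℂ (r.left i) (H × H) := fun i => Coalgebra.Repr.arbitrary ℂ _
  have c : ∀ i, Coalgebra.Repr ℂ (r.right i) (H × H) := fun i => Coalgebra.Repr.arbitrary ℂ _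
  have h := Coalgebra.sum_map_tmul_tmul_eq (R := ℂ)
    ((Coalgebra.comul (R := ℂ)) ∘ₗ (HopfAlgebra.antipode (R := ℂ)))
    (Coalgebra.comul (R := ℂ) (A := H)) Gop x (repr := r) (a₁ := p) (a₂ := c)
  have h2 := congrArg (μ3 (H ⊗[ℂ] H)) h
  rw [map_sum, map_sum] at h2
  simp only [map_sum, μ3_tmul, LinearMap.comp_apply] at h2
  -- LHS
  have hL : (∑ i ∈ r.index, ∑ j ∈ (c i).index,
      Coalgebra.comul (R := ℂ) (HopfAlgebra.antipode (R := ℂ) (r.left i)) *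
        (Coalgebra.comul (R := ℂ) ((c i).left j) * Gop ((c i).right j)))
      = Coalgebra.comul (R := ℂ) (HopfAlgebra.antipode (R := ℂ) x) := by
    have hL1 : ∀ i ∈ r.index,
        (∑ j ∈ (c i).index,
          Coalgebra.comul (R := ℂ) (HopfAlgebra.antipode (R := ℂ) (r.left i)) *
            (Coalgebra.comul (R := ℂ) ((c i).left j) * Gop ((c i).right j)))
        = Coalgebra.counit (R := ℂ) (r.right i) •
            Coalgebra.comul (R := ℂ) (HopfAlgebra.antipode (R := ℂ) (r.left i)) := by
      intro i _
      rw [← Finset.mul_sum, claimI (r.right i) (c i), mul_smul_comm, mul_one]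
    rw [Finset.sum_congr rfl hL1]
    have : (∑ i ∈ r.index, Coalgebra.counit (R := ℂ) (r.right i) •
        Coalgebra.comul (R := ℂ) (HopfAlgebra.antipode (R := ℂ) (r.left i)))
        = Coalgebra.comul (R := ℂ) (HopfAlgebra.antipode (R := ℂ)
            (∑ i ∈ r.index, Coalgebra.counit (R := ℂ) (r.right i) • r.left i)) := by
      rw [map_sum, map_sum]
      refine Finset.sum_congr rfl fun i _ => ?_
      rw [map_smul, map_smul]
    rw [this, sum_smul_counit_left r]
  -- RHS
  have hR : (∑ i ∈ r.index, ∑ k ∈ (p i).index,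
      Coalgebra.comul (R := ℂ) (HopfAlgebra.antipode (R := ℂ) ((p i).left k)) *
        (Coalgebra.comul (R := ℂ) ((p i).right k) * Gop (r.right i)))
      = Gop x := by
    have hR1 : ∀ i ∈ r.index,
        (∑ k ∈ (p i).index,
          Coalgebra.comul (R := ℂ) (HopfAlgebra.antipode (R := ℂ) ((p i).left k)) *
            (Coalgebra.comul (R := ℂ) ((p i).right k) * Gop (r.right i)))
        = Coalgebra.counit (R := ℂ) (r.left i) • Gop (r.right i) := by
      intro i _
      have : (∑ k ∈ (p i).index,
          Coalgebra.comul (R := ℂ) (HopfAlgebra.antipode (R := ℂ) ((p i).left k)) *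
            (Coalgebra.comul (R := ℂ) ((p i).right k) * Gop (r.right i)))
          = (∑ k ∈ (p i).index,
              Coalgebra.comul (R := ℂ) (HopfAlgebra.antipode (R := ℂ) ((p i).left k)) *
                Coalgebra.comul (R := ℂ) ((p i).right k)) * Gop (r.right i) := by
        rw [Finset.sum_mul]
        exact Finset.sum_congr rfl fun k _ => (mul_assoc _ _ _).symm
      rw [this, claimII (r.left i) (p i), smul_mul_assoc, one_mul]
    rw [Finset.sum_congr rfl hR1]
    have : (∑ i ∈ r.index, Coalgebra.counit (R := ℂ) (r.left i) • Gop (r.right i))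
        = Gop (∑ i ∈ r.index, Coalgebra.counit (R := ℂ) (r.left i) • r.right i) := by
      rw [map_sum]
      exact Finset.sum_congr rfl fun i _ => (map_smul _ _ _).symm
    rw [this, sum_counit_smul_right r]
  rw [hL, hR] at h2
  rw [h2, Gop]
  simp only [LinearMap.comp_apply, LinearEquiv.coe_coe]



/-! ### Convolution operators -/

lemma lconv_apply' (f : H →ₗ[ℂ] ℂ) {x : H} (r : Coalgebra.Repr ℂ x (H × H)) :
    lconv f x = ∑ i ∈ r.index, f (r.left i) • r.right i := by
  rw [lconv]
  simp only [LinearMap.comp_apply]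
  rw [← r.eq, map_sum, map_sum]
  simp only [TensorProduct.map_tmul, LinearMap.id_coe, id_eq, LinearEquiv.coe_coe,
    TensorProduct.lid_tmul]

lemma rconv_apply' (f : H →ₗ[ℂ] ℂ) {x : H} (r : Coalgebra.Repr ℂ x (H × H)) :
    rconv f x = ∑ i ∈ r.index, f (r.right i) • r.left i := by
  rw [rconv]
  simp only [LinearMap.comp_apply]
  rw [← r.eq, map_sum, map_sum]
  simp only [TensorProduct.map_tmul, LinearMap.id_coe, id_eq, LinearEquiv.coe_coe,
    TensorProduct.rid_tmul]

/-- convolution of two functionals -/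
noncomputable def cF (f g : H →ₗ[ℂ] ℂ) : H →ₗ[ℂ] ℂ :=
  LinearMap.mul' ℂ ℂ ∘ₗ TensorProduct.map f g ∘ₗ Coalgebra.comul (R := ℂ)

lemma cF_apply (f g : H →ₗ[ℂ] ℂ) {x : H} (r : Coalgebra.Repr ℂ x (H × H)) :
    cF f g x = ∑ i ∈ r.index, f (r.left i) * g (r.right i) := by
  rw [cF]
  simp only [LinearMap.comp_apply]
  rw [← r.eq, map_sum, map_sum]
  simp only [TensorProduct.map_tmul, LinearMap.mul'_apply]

lemma lconv_lconv (f g : H →ₗ[ℂ] ℂ) (x : H) :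
    lconv f (lconv g x) = lconv (cF g f) x := by
  classical
  have r := Coalgebra.Repr.arbitrary ℂ x
  have p : ∀ i, Coalgebra.Repr ℂ (r.left i) (H × H) := fun i => Coalgebra.Repr.arbitrary ℂ _
  have c : ∀ i, Coalgebra.Repr ℂ (r.right i) (H × H) := fun i => Coalgebra.Repr.arbitrary ℂ _
  set τ : H ⊗[ℂ] (H ⊗[ℂ] H) →ₗ[ℂ] H :=
    (TensorProduct.lid ℂ H).toLinearMap ∘ₗ
      TensorProduct.map g ((TensorProduct.lid ℂ H).toLinearMap ∘ₗ
        TensorProduct.map f LinearMap.id) with hτ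
  have τ_tmul : ∀ u v w : H, τ (u ⊗ₜ (v ⊗ₜ w)) = (g u * f v) • w := by
    intro u v w
    simp [hτ, smul_smul, mul_comm]
  have h1 := congrArg τ (Coalgebra.sum_tmul_tmul_eq (R := ℂ) r p c)
  rw [map_sum, map_sum] at h1
  simp only [map_sum, τ_tmul] at h1
  calc lconv f (lconv g x)
      = ∑ i ∈ r.index, ∑ j ∈ (c i).index,
          (g (r.left i) * f ((c i).left j)) • (c i).right j := by
        rw [lconv_apply' g r, map_sum]
        refine Finset.sum_congr rfl fun i _ => ?_
        rw [map_smul, lconv_apply' f (c i), Finset.smul_sum]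
        exact Finset.sum_congr rfl fun j _ => by rw [smul_smul]
    _ = ∑ i ∈ r.index, ∑ k ∈ (p i).index,
          (g ((p i).left k) * f ((p i).right k)) • r.right i := h1.symm
    _ = lconv (cF g f) x := by
        rw [lconv_apply' (cF g f) r]
        refine Finset.sum_congr rfl fun i _ => ?_
        rw [cF_apply g f (p i), Finset.sum_smul]

lemma rconv_rconv (f g : H →ₗ[ℂ] ℂ) (x : H) :
    rconv f (rconv g x) = rconv (cF f g) x := by
  classical
  have r := Coalgebra.Repr.arbitrary ℂ x
  have p : ∀ i, Coalgebra.Repr ℂ (r.left i) (H × H) := fun i => Coalgebra.Repr.arbitrary ℂ _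
  have c : ∀ i, Coalgebra.Repr ℂ (r.right i) (H × H) := fun i => Coalgebra.Repr.arbitrary ℂ _
  set τ : H ⊗[ℂ] (H ⊗[ℂ] H) →ₗ[ℂ] H :=
    (TensorProduct.lid ℂ H).toLinearMap ∘ₗ
      TensorProduct.map (LinearMap.mul' ℂ ℂ ∘ₗ TensorProduct.map f g) LinearMap.id ∘ₗ
        (TensorProduct.comm ℂ H (H ⊗[ℂ] H)).toLinearMap with hτ
  have τ_tmul : ∀ u v w : H, τ (u ⊗ₜ (v ⊗ₜ w)) = (f v * g w) • u := by
    intro u v w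
    simp [hτ]
  have h1 := congrArg τ (Coalgebra.sum_tmul_tmul_eq (R := ℂ) r p c)
  rw [map_sum, map_sum] at h1
  simp only [map_sum, τ_tmul] at h1
  calc rconv f (rconv g x)
      = ∑ i ∈ r.index, ∑ k ∈ (p i).index,
          (f ((p i).right k) * g (r.right i)) • (p i).left k := by
        rw [rconv_apply' g r, map_sum]
        refine Finset.sum_congr rfl fun i _ => ?_
        rw [map_smul, rconv_apply' f (p i), Finset.smul_sum]
        refine Finset.sum_congr rfl fun k _ => ?_
        rw [smul_smul, mul_comm]
    _ = ∑ i ∈ r.index, ∑ j ∈ (c i).index,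
          (f ((c i).left j) * g ((c i).right j)) • r.left i := h1
    _ = rconv (cF f g) x := by
        rw [rconv_apply' (cF f g) r]
        refine Finset.sum_congr rfl fun i _ => ?_
        rw [cF_apply f g (c i), Finset.sum_smul]

lemma lconv_counit (x : H) : lconv (Coalgebra.counit (R := ℂ)) x = x := by
  have r := Coalgebra.Repr.arbitrary ℂ x
  rw [lconv_apply' _ r]
  exact sum_counit_smul_right r

lemma rconv_counit (x : H) : rconv (Coalgebra.counit (R := ℂ)) x = x := by
  have r := Coalgebra.Repr.arbitrary ℂ x
  rw [rconv_apply' _ r]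
  exact sum_smul_counit_left r

lemma cF_char_antipode (Φ : H →ₐ[ℂ] ℂ) :
    cF Φ.toLinearMap (Φ.toLinearMap ∘ₗ HopfAlgebra.antipode (R := ℂ)) =
      Coalgebra.counit (R := ℂ) := by
  apply LinearMap.ext
  intro x
  have r := Coalgebra.Repr.arbitrary ℂ x
  rw [cF_apply _ _ r]
  simp only [LinearMap.comp_apply, AlgHom.toLinearMap_apply]
  have h1 : (∑ i ∈ r.index, Φ (r.left i) * Φ (HopfAlgebra.antipode (R := ℂ) (r.right i)))
      = Φ (∑ i ∈ r.index, r.left i * HopfAlgebra.antipode (R := ℂ) (r.right i)) := by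
    rw [map_sum]
    exact Finset.sum_congr rfl fun i _ => (map_mul Φ _ _).symm
  rw [h1, sum_mul_antipode_eq_algebraMap_counit (R := ℂ) r, AlgHom.commutes]
  simp

lemma cF_antipode_char (Φ : H →ₐ[ℂ] ℂ) :
    cF (Φ.toLinearMap ∘ₗ HopfAlgebra.antipode (R := ℂ)) Φ.toLinearMap =
      Coalgebra.counit (R := ℂ) := by
  apply LinearMap.ext
  intro x
  have r := Coalgebra.Repr.arbitrary ℂ x
  rw [cF_apply _ _ r]
  simp only [LinearMap.comp_apply, AlgHom.toLinearMap_apply]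
  have h1 : (∑ i ∈ r.index, Φ (HopfAlgebra.antipode (R := ℂ) (r.left i)) * Φ (r.right i))
      = Φ (∑ i ∈ r.index, HopfAlgebra.antipode (R := ℂ) (r.left i) * r.right i) := by
    rw [map_sum]
    exact Finset.sum_congr rfl fun i _ => (map_mul Φ _ _).symm
  rw [h1, sum_antipode_mul_eq_algebraMap_counit (R := ℂ) r, AlgHom.commutes]
  simp

/-- the convolution inverse of `convConj Φ` -/
noncomputable def convConjInv (Φ : H →ₐ[ℂ] ℂ) : H →ₗ[ℂ] H :=
  lconv (Φ.toLinearMap ∘ₗ HopfAlgebra.antipode (R := ℂ)) ∘ₗ rconv Φ.toLinearMap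

lemma convConj_convConjInv (Φ : H →ₐ[ℂ] ℂ) (x : H) :
    convConj Φ (convConjInv Φ x) = x := by
  show (rconv (Φ.toLinearMap ∘ₗ HopfAlgebra.antipode (R := ℂ)) ∘ₗ lconv Φ.toLinearMap)
    ((lconv (Φ.toLinearMap ∘ₗ HopfAlgebra.antipode (R := ℂ)) ∘ₗ rconv Φ.toLinearMap) x) = x
  simp only [LinearMap.comp_apply]
  rw [lconv_lconv, cF_antipode_char, lconv_counit, rconv_rconv, cF_antipode_char, rconv_counit]

lemma convConjInv_convConj (Φ : H →ₐ[ℂ] ℂ) (x : H) :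
    convConjInv Φ (convConj Φ x) = x := by
  show (lconv (Φ.toLinearMap ∘ₗ HopfAlgebra.antipode (R := ℂ)) ∘ₗ rconv Φ.toLinearMap)
    ((rconv (Φ.toLinearMap ∘ₗ HopfAlgebra.antipode (R := ℂ)) ∘ₗ lconv Φ.toLinearMap) x) = x
  simp only [LinearMap.comp_apply]
  rw [rconv_rconv, cF_char_antipode, rconv_counit, lconv_lconv, cF_char_antipode, lconv_counit]

/-! ### Group-like elements -/

lemma grouplike_mul_antipode {a : H} (ha : IsGroupLikeElemHopf a) :
    a * HopfAlgebra.antipode (R := ℂ) a = 1 := by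
  have h := mul_antipode_lTensor_comul_apply (R := ℂ) a
  rw [ha.1] at h
  simp only [LinearMap.lTensor_tmul, LinearMap.mul'_apply] at h
  rw [h, ha.2, map_one]

lemma antipode_mul_grouplike {a : H} (ha : IsGroupLikeElemHopf a) :
    HopfAlgebra.antipode (R := ℂ) a * a = 1 := by
  have h := mul_antipode_rTensor_comul_apply (R := ℂ) a
  rw [ha.1] at h
  simp only [LinearMap.rTensor_tmul, LinearMap.mul'_apply] at h
  rw [h, ha.2, map_one]

/-! ### Bijectivity of the antipode -/

lemma antipode_bijective (hreg : HasRegularAntipode H) :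
    Function.Bijective (⇑(HopfAlgebra.antipode (R := ℂ) (A := H))) := by
  obtain ⟨a, Φ, m, hm, hgl, hS⟩ := hreg
  have haS := grouplike_mul_antipode hgl
  have hSa := antipode_mul_grouplike hgl
  have hconj : Function.Bijective (fun y : H => a * y * HopfAlgebra.antipode (R := ℂ) a) := by
    constructor
    · have hli : ∀ y : H,
          HopfAlgebra.antipode (R := ℂ) a * (a * y * HopfAlgebra.antipode (R := ℂ) a) * a
            = y := by
        intro y
        simp only [← mul_assoc]
        rw [hSa, one_mul, mul_assoc, hSa, mul_one]
      intro u v huv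
      rw [← hli u, ← hli v]
      simp only at huv
      rw [huv]
    · intro y
      refine ⟨HopfAlgebra.antipode (R := ℂ) a * y * a, ?_⟩
      simp only [← mul_assoc]
      rw [haS, one_mul, mul_assoc, haS, mul_one]
  have hcc : Function.Bijective (⇑(convConj Φ) : H → H) :=
    Function.bijective_iff_has_inverse.mpr
      ⟨⇑(convConjInv Φ), convConjInv_convConj Φ, convConj_convConjInv Φ⟩
  have h2m : Function.Bijective ((⇑(HopfAlgebra.antipode (R := ℂ) (A := H)))^[2*m]) := by
    have he : (⇑(HopfAlgebra.antipode (R := ℂ) (A := H)))^[2*m]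
        = (fun y : H => a * y * HopfAlgebra.antipode (R := ℂ) a) ∘ ⇑(convConj Φ) :=
      funext fun x => hS x
    rw [he]
    exact hconj.comp hcc
  obtain ⟨m', hm'⟩ : ∃ m', 2*m = m' + 1 := ⟨2*m - 1, by omega⟩
  rw [hm'] at h2m
  constructor
  · have h1 := h2m
    rw [Function.iterate_succ] at h1
    exact h1.injective.of_comp
  · have h1 := h2m
    rw [Function.iterate_succ'] at h1
    exact h1.surjective.of_comp

/-! ### Submodule helpers -/

lemma tmul_mem_subTensor {P Q : Submodule ℂ H} {p q : H} (hp : p ∈ P) (hq : q ∈ Q) :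
    p ⊗ₜ[ℂ] q ∈ subTensor P Q :=
  ⟨(⟨p, hp⟩ : P) ⊗ₜ[ℂ] (⟨q, hq⟩ : Q), by simp [TensorProduct.map_tmul]⟩

lemma subTensor_le {P Q : Submodule ℂ H} {T : Submodule ℂ (H ⊗[ℂ] H)}
    (h : ∀ p ∈ P, ∀ q ∈ Q, p ⊗ₜ[ℂ] q ∈ T) : subTensor P Q ≤ T := by
  rintro t ⟨s, rfl⟩
  induction s using TensorProduct.induction_on with
  | zero => simpa using T.zero_mem
  | tmul p q => simpa [TensorProduct.map_tmul] using h p p.2 q q.2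
  | add s₁ s₂ h₁ h₂ =>
    rw [map_add]
    exact T.add_mem h₁ h₂

lemma subTensor_mono {P P' Q Q' : Submodule ℂ H} (hP : P ≤ P') (hQ : Q ≤ Q') :
    subTensor P Q ≤ subTensor P' Q' :=
  subTensor_le fun p hp q hq => tmul_mem_subTensor (hP hp) (hQ hq)

lemma rconv_mem {K : Submodule ℂ H} {x : H}
    (hx : Coalgebra.comul (R := ℂ) x ∈ subTensor K ⊤ ⊔ subTensor ⊤ K)
    (f : H →ₗ[ℂ] ℂ) (hf : ∀ u ∈ K, f u = 0) : rconv f x ∈ K := by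
  rcases Submodule.mem_sup.mp hx with ⟨t₁, h₁, t₂, h₂, hsum⟩
  set g : H ⊗[ℂ] H →ₗ[ℂ] H :=
    (TensorProduct.rid ℂ H).toLinearMap ∘ₗ TensorProduct.map LinearMap.id f with hg
  have hrv : rconv f x = g t₁ + g t₂ := by
    rw [rconv]
    simp only [LinearMap.comp_apply]
    rw [← hsum, map_add, map_add]
    rfl
  rw [hrv]
  refine K.add_mem ?_ ?_
  · have hle : subTensor K ⊤ ≤ Submodule.comap g K := by
      refine subTensor_le fun p hp q _ => ?_
      simp only [Submodule.mem_comap, hg, LinearMap.comp_apply, TensorProduct.map_tmul,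
        LinearMap.id_coe, id_eq, LinearEquiv.coe_coe, TensorProduct.rid_tmul]
      exact K.smul_mem _ hp
    exact hle h₁
  · have hle : subTensor ⊤ K ≤ Submodule.comap g K := by
      refine subTensor_le fun p _ q hq => ?_
      simp only [Submodule.mem_comap, hg, LinearMap.comp_apply, TensorProduct.map_tmul,
        LinearMap.id_coe, id_eq, LinearEquiv.coe_coe, TensorProduct.rid_tmul, hf q hq,
        zero_smul]
      exact K.zero_mem
    exact hle h₂

lemma lconv_mem {K : Submodule ℂ H} {x : H}
    (hx : Coalgebra.comul (R := ℂ) x ∈ subTensor K ⊤ ⊔ subTensor ⊤ K)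
    (f : H →ₗ[ℂ] ℂ) (hf : ∀ u ∈ K, f u = 0) : lconv f x ∈ K := by
  rcases Submodule.mem_sup.mp hx with ⟨t₁, h₁, t₂, h₂, hsum⟩
  set g : H ⊗[ℂ] H →ₗ[ℂ] H :=
    (TensorProduct.lid ℂ H).toLinearMap ∘ₗ TensorProduct.map f LinearMap.id with hg
  have hrv : lconv f x = g t₁ + g t₂ := by
    rw [lconv]
    simp only [LinearMap.comp_apply]
    rw [← hsum, map_add, map_add]
    rfl
  rw [hrv]
  refine K.add_mem ?_ ?_
  · have hle : subTensor K ⊤ ≤ Submodule.comap g K := by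
      refine subTensor_le fun p hp q _ => ?_
      simp only [Submodule.mem_comap, hg, LinearMap.comp_apply, TensorProduct.map_tmul,
        LinearMap.id_coe, id_eq, LinearEquiv.coe_coe, TensorProduct.lid_tmul, hf p hp,
        zero_smul]
      exact K.zero_mem
    exact hle h₁
  · have hle : subTensor ⊤ K ≤ Submodule.comap g K := by
      refine subTensor_le fun p _ q hq => ?_
      simp only [Submodule.mem_comap, hg, LinearMap.comp_apply, TensorProduct.map_tmul,
        LinearMap.id_coe, id_eq, LinearEquiv.coe_coe, TensorProduct.lid_tmul]
      exact K.smul_mem _ hq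
    exact hle h₂

/-! ### Hopf ideals and the antipode preimage -/

lemma isHopfIdeal_comap_antipode (hbij : Function.Bijective
      (⇑(HopfAlgebra.antipode (R := ℂ) (A := H))))
    {K : Submodule ℂ H} (hK : IsHopfIdeal K) :
    IsHopfIdeal (Submodule.comap (HopfAlgebra.antipode (R := ℂ) : H →ₗ[ℂ] H) K) := by
  set Se : H ≃ₗ[ℂ] H :=
    LinearEquiv.ofBijective (HopfAlgebra.antipode (R := ℂ) : H →ₗ[ℂ] H) hbij with hSe
  have hSe_apply : ∀ x : H, Se x = HopfAlgebra.antipode (R := ℂ) x := fun _ => rfl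
  set K' : Submodule ℂ H :=
    Submodule.comap (HopfAlgebra.antipode (R := ℂ) : H →ₗ[ℂ] H) K with hK'
  have hmemK' : ∀ x : H, x ∈ K' ↔ HopfAlgebra.antipode (R := ℂ) x ∈ K := fun _ => Iff.rfl
  refine ⟨⟨?_, ?_⟩, ?_, ?_, ?_⟩
  · intro x u hu
    rw [hmemK', antipode_mul']
    exact hK.mul_mem_right _ hu
  · intro u x hu
    rw [hmemK', antipode_mul']
    exact hK.mul_mem_left _ hu
  · intro u hu
    rw [← counit_antipode' u]
    exact hK.counit_eq_zero _ hu
  · intro u hu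
    have h := hK.comul_mem _ hu
    rw [comul_antipode'] at h
    set E : H ⊗[ℂ] H ≃ₗ[ℂ] H ⊗[ℂ] H :=
      (TensorProduct.comm ℂ H H).trans (TensorProduct.congr Se Se) with hE
    have hE_comul : E (Coalgebra.comul (R := ℂ) u)
        = TensorProduct.map (HopfAlgebra.antipode (R := ℂ)) (HopfAlgebra.antipode (R := ℂ))
            (TensorProduct.comm ℂ H H (Coalgebra.comul (R := ℂ) u)) := by
      rw [hE]
      simp only [LinearEquiv.trans_apply]
      generalize (TensorProduct.comm ℂ H H) (Coalgebra.comul (R := ℂ) u) = t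
      induction t using TensorProduct.induction_on with
      | zero => simp
      | tmul p q => simp [TensorProduct.congr_tmul, hSe_apply]
      | add s₁ s₂ h₁ h₂ => rw [map_add, map_add, h₁, h₂]
    rw [← hE_comul] at h
    rcases Submodule.mem_sup.mp h with ⟨t₁, h₁, t₂, h₂, hsum⟩
    have hu2 : Coalgebra.comul (R := ℂ) u = E.symm t₁ + E.symm t₂ := by
      rw [← map_add, LinearEquiv.eq_symm_apply]
      exact hsum.symm
    have hsymm_tmul : ∀ p q : H, E.symm (p ⊗ₜ[ℂ] q) = Se.symm q ⊗ₜ[ℂ] Se.symm p := by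
      intro p q
      rw [LinearEquiv.symm_apply_eq]
      simp [hE, LinearEquiv.trans_apply, TensorProduct.comm_tmul, TensorProduct.congr_tmul,
        Se.apply_symm_apply]
    have hc1 : ∀ t ∈ subTensor K (⊤ : Submodule ℂ H), E.symm t ∈ subTensor ⊤ K' := by
      intro t ht
      refine subTensor_le (T := Submodule.comap E.symm.toLinearMap (subTensor ⊤ K'))
        (fun p hp q _ => ?_) ht
      simp only [Submodule.mem_comap, LinearEquiv.coe_coe, hsymm_tmul]
      refine tmul_mem_subTensor trivial ?_
      rw [hmemK', ← hSe_apply, Se.apply_symm_apply]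
      exact hp
    have hc2 : ∀ t ∈ subTensor (⊤ : Submodule ℂ H) K, E.symm t ∈ subTensor K' ⊤ := by
      intro t ht
      refine subTensor_le (T := Submodule.comap E.symm.toLinearMap (subTensor K' ⊤))
        (fun p _ q hq => ?_) ht
      simp only [Submodule.mem_comap, LinearEquiv.coe_coe, hsymm_tmul]
      refine tmul_mem_subTensor ?_ trivial
      rw [hmemK', ← hSe_apply, Se.apply_symm_apply]
      exact hq
    rw [hu2]
    exact Submodule.add_mem _ (Submodule.mem_sup_right (hc1 _ h₁))
      (Submodule.mem_sup_left (hc2 _ h₂))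
  · intro u hu
    rw [hmemK']
    exact hK.antipode_mem _ hu

/-! ### The chain of preimages -/

noncomputable def chainU (J : Submodule ℂ H) : ℕ → Submodule ℂ H
  | 0 => J
  | n+1 => Submodule.comap (HopfAlgebra.antipode (R := ℂ) : H →ₗ[ℂ] H) (chainU J n)

lemma isHopfIdeal_chainU (hbij : Function.Bijective
      (⇑(HopfAlgebra.antipode (R := ℂ) (A := H))))
    {J : Submodule ℂ H} (hJ : IsHopfIdeal J) : ∀ n, IsHopfIdeal (chainU J n)
  | 0 => hJ
  | n+1 => isHopfIdeal_comap_antipode hbij (isHopfIdeal_chainU hbij hJ n)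

lemma mem_chainU {J : Submodule ℂ H} {x : H} :
    ∀ n, x ∈ chainU J n ↔ (⇑(HopfAlgebra.antipode (R := ℂ) (A := H)))^[n] x ∈ J := by
  intro n
  induction n generalizing x with
  | zero => simp [chainU]
  | succ n ih =>
    rw [Function.iterate_succ_apply]
    exact ih (x := HopfAlgebra.antipode (R := ℂ) x)

lemma chainU_mono (hbij : Function.Bijective (⇑(HopfAlgebra.antipode (R := ℂ) (A := H))))
    {J : Submodule ℂ H} (hJ : IsHopfIdeal J) : Monotone (chainU J) := by
  refine monotone_nat_of_le_succ fun n x hx => ?_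
  exact (isHopfIdeal_chainU hbij hJ n).antipode_mem x hx

/-! ### the finite-codimensional ideal -/

variable {A : Type*} [Ring A] [Algebra ℂ A]

noncomputable def bigF (π : H →ₐ[ℂ] A) (Φ : H →ₐ[ℂ] ℂ) (m : ℕ) :
    H →ₗ[ℂ] (Fin (2*m) → A × ℂ) :=
  LinearMap.pi fun k =>
    (π.toLinearMap.prod Φ.toLinearMap) ∘ₗ
      ((HopfAlgebra.antipode (R := ℂ) : H →ₗ[ℂ] H) ^ (k : ℕ))

lemma mem_ker_bigF {π : H →ₐ[ℂ] A} {Φ : H →ₐ[ℂ] ℂ} {m : ℕ} {x : H} :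
    x ∈ LinearMap.ker (bigF π Φ m) ↔
      ∀ k : ℕ, k < 2*m →
        π ((⇑(HopfAlgebra.antipode (R := ℂ) (A := H)))^[k] x) = 0 ∧
        Φ ((⇑(HopfAlgebra.antipode (R := ℂ) (A := H)))^[k] x) = 0 := by
  rw [LinearMap.mem_ker, funext_iff]
  simp only [bigF, LinearMap.pi_apply, LinearMap.comp_apply, LinearMap.prod_apply,
    Module.End.pow_apply, Pi.zero_apply, Prod.mk_eq_zero, AlgHom.toLinearMap_apply,
    Pi.prod, Function.prod_apply]
  exact ⟨fun h k hk => h ⟨k, hk⟩, fun h k => h k.1 k.2⟩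

lemma iter_antipode_mul (k : ℕ) (u v : H) :
    (⇑(HopfAlgebra.antipode (R := ℂ) (A := H)))^[k] (u * v)
      = (⇑(HopfAlgebra.antipode (R := ℂ) (A := H)))^[k] u *
          (⇑(HopfAlgebra.antipode (R := ℂ) (A := H)))^[k] v ∨
    (⇑(HopfAlgebra.antipode (R := ℂ) (A := H)))^[k] (u * v)
      = (⇑(HopfAlgebra.antipode (R := ℂ) (A := H)))^[k] v *
          (⇑(HopfAlgebra.antipode (R := ℂ) (A := H)))^[k] u := by
  induction k with
  | zero => left; simp
  | succ k ih =>
    rw [Function.iterate_succ_apply', Function.iterate_succ_apply',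
      Function.iterate_succ_apply']
    rcases ih with h | h
    · right
      rw [h, antipode_mul']
    · left
      rw [h, antipode_mul']

lemma tws_ker_bigF (π : H →ₐ[ℂ] A) (Φ : H →ₐ[ℂ] ℂ) (m : ℕ) :
    IsTwoSidedIdealSub (LinearMap.ker (bigF π Φ m)) := by
  constructor
  · intro u x hx
    rw [mem_ker_bigF] at hx ⊢
    intro k hk
    obtain ⟨h1, h2⟩ := hx k hk
    rcases iter_antipode_mul k u x with h | h <;> rw [h] <;>
      constructor <;> simp [map_mul, h1, h2]
  · intro x u hx
    rw [mem_ker_bigF] at hx ⊢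
    intro k hk
    obtain ⟨h1, h2⟩ := hx k hk
    rcases iter_antipode_mul k x u with h | h <;> rw [h] <;>
      constructor <;> simp [map_mul, h1, h2]

lemma findim_quot_ker_bigF (π : H →ₐ[ℂ] A) (Φ : H →ₐ[ℂ] ℂ) (m : ℕ)
    [FiniteDimensional ℂ A] :
    FiniteDimensional ℂ (H ⧸ LinearMap.ker (bigF π Φ m)) :=
  Module.Finite.equiv (LinearMap.quotKerEquivRange (bigF π Φ m)).symm

/-! ### The key induction step -/

lemma lemmaR (π : H →ₐ[ℂ] A) (a : H) (Φ : H →ₐ[ℂ] ℂ) (m : ℕ) (hm : 1 ≤ m)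
    (hgl : IsGroupLikeElemHopf a)
    (hS : ∀ x : H, (⇑(HopfAlgebra.antipode (R := ℂ) (A := H)))^[2 * m] x =
      a * convConj Φ x * HopfAlgebra.antipode (R := ℂ) a)
    (hbij : Function.Bijective (⇑(HopfAlgebra.antipode (R := ℂ) (A := H))))
    {K : Submodule ℂ H} (hK : IsHopfIdeal K) (hKI : K ≤ LinearMap.ker (bigF π Φ m)) :
    Submodule.comap (HopfAlgebra.antipode (R := ℂ) : H →ₗ[ℂ] H) K
      ≤ LinearMap.ker (bigF π Φ m) := by
  intro y hy
  replace hy : HopfAlgebra.antipode (R := ℂ) y ∈ K := hy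
  rw [mem_ker_bigF]
  intro k hk
  match k with
  | (k' + 1) =>
    rw [Function.iterate_succ_apply]
    exact mem_ker_bigF.mp (hKI hy) k' (by omega)
  | 0 =>
    simp only [Function.iterate_zero, id_eq]
    -- the heart of the argument
    have hΦK : ∀ u ∈ K, Φ.toLinearMap u = 0 := by
      intro u hu
      have := (mem_ker_bigF.mp (hKI hu) 0 (by omega)).2
      simpa using this
    have hΦSK : ∀ u ∈ K, (Φ.toLinearMap ∘ₗ (HopfAlgebra.antipode (R := ℂ) : H →ₗ[ℂ] H)) u
        = 0 := by
      intro u hu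
      have := (mem_ker_bigF.mp (hKI hu) 1 (by omega)).2
      simpa using this
    have hz : HopfAlgebra.antipode (R := ℂ) a * HopfAlgebra.antipode (R := ℂ) y * a ∈ K :=
      hK.mul_mem_right a (hK.mul_mem_left _ hy)
    set z : H := HopfAlgebra.antipode (R := ℂ) a * HopfAlgebra.antipode (R := ℂ) y * a
      with hzdef
    set w : H := convConjInv Φ z with hwdef
    have hw : w ∈ K := by
      rw [hwdef, convConjInv]
      simp only [LinearMap.comp_apply]
      exact lconv_mem (hK.comul_mem _ (rconv_mem (hK.comul_mem _ hz) _ hΦK)) _ hΦSK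
    have hy2 : y = (⇑(HopfAlgebra.antipode (R := ℂ) (A := H)))^[2*m - 1] w := by
      apply hbij.injective
      have hstep : HopfAlgebra.antipode (R := ℂ)
          ((⇑(HopfAlgebra.antipode (R := ℂ) (A := H)))^[2*m - 1] w)
          = (⇑(HopfAlgebra.antipode (R := ℂ) (A := H)))^[2*m] w := by
        obtain ⟨m', hm'⟩ : ∃ m', 2*m = m' + 1 := ⟨2*m - 1, by omega⟩
        have h1 : 2*m - 1 = m' := by omega
        rw [h1, hm', Function.iterate_succ_apply']
      rw [hstep, hS w, hwdef, convConj_convConjInv, hzdef]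
      have haS := grouplike_mul_antipode hgl
      simp only [← mul_assoc]
      rw [haS, one_mul]
      rw [mul_assoc (HopfAlgebra.antipode (R := ℂ) y) a (HopfAlgebra.antipode (R := ℂ) a),
        haS, mul_one]
    rw [hy2]
    exact mem_ker_bigF.mp (hKI hw) (2*m - 1) (by omega)

/-! ### Backward direction -/

lemma backward (hreg : HasRegularAntipode H) (rep : SStableInnerFaithfulFinDimRep H) :
    InnerLinear H := by
  obtain ⟨a, Φ, m, hm, hgl, hS⟩ := hreg
  letI := rep.ring
  letI := rep.alg
  letI := rep.findim
  have hbij : Function.Bijective (⇑(HopfAlgebra.antipode (R := ℂ) (A := H))) :=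
    antipode_bijective ⟨a, Φ, m, hm, hgl, hS⟩
  refine ⟨LinearMap.ker (bigF rep.π Φ m), tws_ker_bigF rep.π Φ m,
    findim_quot_ker_bigF rep.π Φ m, ?_⟩
  intro J hJ hJI
  have hchain : ∀ n, chainU J n ≤ LinearMap.ker (bigF rep.π Φ m) := by
    intro n
    induction n with
    | zero => exact hJI
    | succ n ih =>
      exact lemmaR rep.π a Φ m hm hgl hS hbij (isHopfIdeal_chainU hbij hJ n) ih
  have hmemU : ∀ x : H, (x ∈ ⨆ n, chainU J n) ↔ ∃ n, x ∈ chainU J n := fun x =>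
    Submodule.mem_iSup_of_chain (⟨chainU J, chainU_mono hbij hJ⟩ : ℕ →o Submodule ℂ H) x
  have hchainHopf : ∀ n, IsHopfIdeal (chainU J n) := isHopfIdeal_chainU hbij hJ
  have hUhopf : IsHopfIdeal (⨆ n, chainU J n) := by
    refine ⟨⟨?_, ?_⟩, ?_, ?_, ?_⟩
    · intro x u hu
      rcases (hmemU u).mp hu with ⟨n, hn⟩
      exact (hmemU _).mpr ⟨n, (hchainHopf n).mul_mem_left x hn⟩
    · intro u x hu
      rcases (hmemU u).mp hu with ⟨n, hn⟩
      exact (hmemU _).mpr ⟨n, (hchainHopf n).mul_mem_right x hn⟩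
    · intro u hu
      rcases (hmemU u).mp hu with ⟨n, hn⟩
      exact (hchainHopf n).counit_eq_zero u hn
    · intro u hu
      rcases (hmemU u).mp hu with ⟨n, hn⟩
      have h := (hchainHopf n).comul_mem u hn
      have hle : chainU J n ≤ ⨆ n, chainU J n := le_iSup (chainU J) n
      exact sup_le_sup (subTensor_mono hle le_rfl) (subTensor_mono le_rfl hle) h
    · intro u hu
      rcases (hmemU u).mp hu with ⟨n, hn⟩
      exact (hmemU _).mpr ⟨n, (hchainHopf n).antipode_mem u hn⟩
  have hUstable : Submodule.map (HopfAlgebra.antipode (R := ℂ)) (⨆ n, chainU J n)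
      = ⨆ n, chainU J n := by
    apply le_antisymm
    · rw [Submodule.map_le_iff_le_comap]
      intro x hx
      rcases (hmemU x).mp hx with ⟨n, hn⟩
      exact (hmemU _).mpr ⟨n, (hchainHopf n).antipode_mem x hn⟩
    · intro x hx
      rcases (hmemU x).mp hx with ⟨n, hn⟩
      obtain ⟨w, hw⟩ := hbij.surjective x
      refine Submodule.mem_map.mpr ⟨w, (hmemU w).mpr ⟨n+1, ?_⟩, hw⟩
      show HopfAlgebra.antipode (R := ℂ) w ∈ chainU J n
      rw [show HopfAlgebra.antipode (R := ℂ) w = x from hw]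
      exact hn
  have hUvanish : ∀ x ∈ ⨆ n, chainU J n, rep.π x = 0 := by
    intro x hx
    rcases (hmemU x).mp hx with ⟨n, hn⟩
    have h := (mem_ker_bigF.mp (hchain n hn) 0 (by omega)).1
    simpa using h
  have hUbot := rep.faithful _ hUhopf hUstable hUvanish
  have hJU : J ≤ ⨆ n, chainU J n := le_iSup (chainU J) 0
  rw [hUbot] at hJU
  exact le_bot_iff.mp hJU

/-! ### Forward direction -/

set_option maxHeartbeats 1000000 in
lemma forward (h : InnerLinear H) : Nonempty (SStableInnerFaithfulFinDimRep H) := by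
  obtain ⟨I, htws, hfd, hmax⟩ := h
  letI := hfd
  let act : H → Module.End ℂ (H ⧸ I) := fun x =>
    Submodule.mapQ I I (LinearMap.mulLeft ℂ x) (fun y hy => htws.mul_mem_left x hy)
  have act_apply : ∀ (x y : H),
      act x (Submodule.Quotient.mk y) = Submodule.Quotient.mk (x * y) := by
    intro x y
    simp [act, Submodule.mapQ_apply]
    rfl
  let π1 : H →ₐ[ℂ] Module.End ℂ (H ⧸ I) :=
    { toFun := act
      map_one' := by
        apply LinearMap.ext
        intro z
        obtain ⟨y, rfl⟩ := Submodule.Quotient.mk_surjective I z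
        rw [act_apply, one_mul]
        rfl
      map_mul' := by
        intro x y
        apply LinearMap.ext
        intro z
        obtain ⟨w, rfl⟩ := Submodule.Quotient.mk_surjective I z
        rw [Module.End.mul_apply, act_apply, act_apply, act_apply, mul_assoc]
      map_zero' := by
        apply LinearMap.ext
        intro z
        obtain ⟨y, rfl⟩ := Submodule.Quotient.mk_surjective I z
        rw [act_apply, zero_mul]
        rfl
      map_add' := by
        intro x y
        apply LinearMap.ext
        intro z
        obtain ⟨w, rfl⟩ := Submodule.Quotient.mk_surjective I z
        rw [LinearMap.add_apply, act_apply, act_apply, act_apply, add_mul]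
        rfl
      commutes' := by
        intro c
        apply LinearMap.ext
        intro z
        obtain ⟨y, rfl⟩ := Submodule.Quotient.mk_surjective I z
        rw [act_apply, Module.algebraMap_end_apply, ← Algebra.smul_def]
        exact Submodule.Quotient.mk_smul I c y }
  let e : (H ⧸ I) ≃ₗ[ℂ] (Fin (Module.finrank ℂ (H ⧸ I)) → ℂ) :=
    (Module.finBasis ℂ (H ⧸ I)).equivFun
  let π : H →ₐ[ℂ] Module.End ℂ (Fin (Module.finrank ℂ (H ⧸ I)) → ℂ) :=
    ((e.conjAlgEquiv ℂ).toAlgHom).comp π1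
  refine ⟨⟨Module.End ℂ (Fin (Module.finrank ℂ (H ⧸ I)) → ℂ), inferInstance, π, ?_⟩⟩
  intro J hJ _ hvanish
  refine hmax J hJ fun x hx => ?_
  have h0 : π x = 0 := hvanish x hx
  have h1 : π1 x = 0 := by
    apply (e.conjAlgEquiv ℂ).injective
    rw [map_zero]
    exact h0
  have h2 : act x (Submodule.Quotient.mk 1) = 0 := by
    rw [show act x = π1 x from rfl, h1]
    rfl
  rw [act_apply, mul_one] at h2
  exact (Submodule.Quotient.mk_eq_zero I).mp h2

end Stmt8Aux

theorem stmt8 (H : Type*) [Ring H] [HopfAlgebra ℂ H] (hreg : HasRegularAntipode H) :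
    InnerLinear H ↔ Nonempty (SStableInnerFaithfulFinDimRep H) := by
  constructor
  · exact fun h => Stmt8Aux.forward h
  · rintro ⟨rep⟩
    exact Stmt8Aux.backward hreg rep
end

section
/- Let H be a Hopf algebra over ℂ with a regular antipode, witnessed by a group-like element a ∈ H, an algebra homomorphism Φ : H → ℂ with convolution inverse Φ⁻¹ = Φ∘S, and an integer m ≥ 1 with S^{2m}(x) = a·((Φ * id_H * Φ⁻¹)(x))·a⁻¹ for all x ∈ H. If J is a Hopf ideal of H such that Φ(J) = 0 and Φ(S(J)) = 0 (i.e. Φ⁻¹(J) = 0), then S(J) = J. -/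
open scoped TensorProduct

section Regular

variable {H : Type*} [Ring H] [HopfAlgebra ℂ H]

/-- A group-like element: `Δ(a) = a ⊗ a` and `ε(a) = 1`. -/
def IsGroupLikeElemC (a : H) : Prop :=
  Coalgebra.comul (R := ℂ) a = a ⊗ₜ[ℂ] a ∧ Coalgebra.counit (R := ℂ) a = 1

end Regular

section MyAux

open Coalgebra HopfAlgebra TensorProduct

variable {H : Type*} [Ring H] [HopfAlgebra ℂ H]

lemma lconv_repr (φ : H →ₗ[ℂ] ℂ) {ι : Type*} (x : H) (r : Coalgebra.Repr ℂ x ι) :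
    lconv φ x = ∑ i ∈ r.index, φ (r.left i) • r.right i := by
  simp only [lconv, LinearMap.comp_apply, LinearEquiv.coe_coe, ← r.eq, map_sum,
    TensorProduct.map_tmul, LinearMap.id_coe, id_eq, TensorProduct.lid_tmul]

lemma rconv_repr (ψ : H →ₗ[ℂ] ℂ) {ι : Type*} (x : H) (r : Coalgebra.Repr ℂ x ι) :
    rconv ψ x = ∑ i ∈ r.index, ψ (r.right i) • r.left i := by
  simp only [rconv, LinearMap.comp_apply, LinearEquiv.coe_coe, ← r.eq, map_sum,
    TensorProduct.map_tmul, LinearMap.id_coe, id_eq, TensorProduct.rid_tmul]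

/-- Convolution of two linear functionals. -/
noncomputable def myconv (f g : H →ₗ[ℂ] ℂ) : H →ₗ[ℂ] ℂ :=
  (TensorProduct.lid ℂ ℂ).toLinearMap ∘ₗ TensorProduct.map f g ∘ₗ Coalgebra.comul (R := ℂ)

lemma myconv_repr (f g : H →ₗ[ℂ] ℂ) {ι : Type*} (x : H) (r : Coalgebra.Repr ℂ x ι) :
    myconv f g x = ∑ i ∈ r.index, f (r.left i) * g (r.right i) := by
  simp only [myconv, LinearMap.comp_apply, LinearEquiv.coe_coe, ← r.eq, map_sum,
    TensorProduct.map_tmul, TensorProduct.lid_tmul, smul_eq_mul]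

lemma lconv_counit (x : H) : lconv (Coalgebra.counit (R := ℂ)) x = x := by
  have h := Coalgebra.sum_counit_tmul_eq (R := ℂ) (ℛ ℂ x)
  have := congrArg (TensorProduct.lid ℂ H) h
  simp only [map_sum, TensorProduct.lid_tmul, one_smul] at this
  rw [lconv_repr _ x (ℛ ℂ x), this]

lemma rconv_counit (x : H) : rconv (Coalgebra.counit (R := ℂ)) x = x := by
  have h := Coalgebra.sum_tmul_counit_eq (R := ℂ) (ℛ ℂ x)
  have := congrArg (TensorProduct.rid ℂ H) h
  simp only [map_sum, TensorProduct.rid_tmul, one_smul] at this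
  rw [rconv_repr _ x (ℛ ℂ x), this]

lemma lconv_lconv (φ ψ : H →ₗ[ℂ] ℂ) (x : H) :
    lconv φ (lconv ψ x) = lconv (myconv ψ φ) x := by
  classical
  set r := ℛ ℂ x with hr
  have key := Coalgebra.sum_tmul_tmul_eq (R := ℂ) r (fun i => ℛ ℂ (r.left i))
    (fun i => ℛ ℂ (r.right i))
  have hF := congrArg (fun t => (TensorProduct.lid ℂ H)
    (TensorProduct.map ψ ((TensorProduct.lid ℂ H).toLinearMap ∘ₗ
      TensorProduct.map φ LinearMap.id) t)) key
  simp only [map_sum, TensorProduct.map_tmul, LinearMap.comp_apply, LinearEquiv.coe_coe,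
    TensorProduct.lid_tmul, LinearMap.id_coe, id_eq] at hF
  rw [lconv_repr ψ x r, map_sum]
  simp only [map_smul]
  calc ∑ i ∈ r.index, ψ (r.left i) • lconv φ (r.right i)
      = ∑ i ∈ r.index, ψ (r.left i) •
          ∑ j ∈ (ℛ ℂ (r.right i)).index,
            φ ((ℛ ℂ (r.right i)).left j) • (ℛ ℂ (r.right i)).right j := by
        refine Finset.sum_congr rfl fun i _ => ?_
        rw [lconv_repr φ (r.right i) (ℛ ℂ (r.right i))]
    _ = ∑ i ∈ r.index, ∑ j ∈ (ℛ ℂ (r.right i)).index,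
          ψ (r.left i) • φ ((ℛ ℂ (r.right i)).left j) • (ℛ ℂ (r.right i)).right j := by
        simp [Finset.smul_sum]
    _ = ∑ i ∈ r.index, ∑ j ∈ (ℛ ℂ (r.left i)).index,
          ψ ((ℛ ℂ (r.left i)).left j) • φ ((ℛ ℂ (r.left i)).right j) • r.right i := hF.symm
    _ = lconv (myconv ψ φ) x := by
        rw [lconv_repr _ x r]
        refine Finset.sum_congr rfl fun i _ => ?_
        rw [myconv_repr ψ φ (r.left i) (ℛ ℂ (r.left i)), Finset.sum_smul]
        simp [smul_smul]

lemma rconv_rconv (φ ψ : H →ₗ[ℂ] ℂ) (x : H) :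
    rconv φ (rconv ψ x) = rconv (myconv φ ψ) x := by
  classical
  set r := ℛ ℂ x with hr
  have key := Coalgebra.sum_tmul_tmul_eq (R := ℂ) r (fun i => ℛ ℂ (r.left i))
    (fun i => ℛ ℂ (r.right i))
  have hF := congrArg (fun t => (TensorProduct.rid ℂ H)
    (TensorProduct.map LinearMap.id ((TensorProduct.lid ℂ ℂ).toLinearMap ∘ₗ
      TensorProduct.map φ ψ) t)) key
  simp only [map_sum, TensorProduct.map_tmul, LinearMap.comp_apply, LinearEquiv.coe_coe,
    TensorProduct.lid_tmul, TensorProduct.rid_tmul, LinearMap.id_coe, id_eq,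
    smul_eq_mul] at hF
  rw [rconv_repr ψ x r, map_sum]
  simp only [map_smul]
  calc ∑ i ∈ r.index, ψ (r.right i) • rconv φ (r.left i)
      = ∑ i ∈ r.index, ∑ j ∈ (ℛ ℂ (r.left i)).index,
          (φ ((ℛ ℂ (r.left i)).right j) * ψ (r.right i)) • (ℛ ℂ (r.left i)).left j := by
        refine Finset.sum_congr rfl fun i _ => ?_
        rw [rconv_repr φ (r.left i) (ℛ ℂ (r.left i)), Finset.smul_sum]
        simp [smul_smul, mul_comm]
    _ = ∑ i ∈ r.index, ∑ j ∈ (ℛ ℂ (r.right i)).index,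
          (φ ((ℛ ℂ (r.right i)).left j) * ψ ((ℛ ℂ (r.right i)).right j)) • r.left i := hF
    _ = rconv (myconv φ ψ) x := by
        rw [rconv_repr _ x r]
        refine Finset.sum_congr rfl fun i _ => ?_
        rw [myconv_repr φ ψ (r.right i) (ℛ ℂ (r.right i)), Finset.sum_smul]

lemma lconv_rconv (φ ψ : H →ₗ[ℂ] ℂ) (x : H) :
    lconv φ (rconv ψ x) = rconv ψ (lconv φ x) := by
  classical
  set r := ℛ ℂ x with hr
  have key := Coalgebra.sum_tmul_tmul_eq (R := ℂ) r (fun i => ℛ ℂ (r.left i))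
    (fun i => ℛ ℂ (r.right i))
  have hF := congrArg (fun t => (TensorProduct.lid ℂ H)
    (TensorProduct.map φ ((TensorProduct.rid ℂ H).toLinearMap ∘ₗ
      TensorProduct.map LinearMap.id ψ) t)) key
  simp only [map_sum, TensorProduct.map_tmul, LinearMap.comp_apply, LinearEquiv.coe_coe,
    TensorProduct.lid_tmul, TensorProduct.rid_tmul, LinearMap.id_coe, id_eq] at hF
  rw [rconv_repr ψ x r, map_sum, lconv_repr φ x r, map_sum]
  simp only [map_smul]
  calc ∑ i ∈ r.index, ψ (r.right i) • lconv φ (r.left i)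
      = ∑ i ∈ r.index, ∑ j ∈ (ℛ ℂ (r.left i)).index,
          φ ((ℛ ℂ (r.left i)).left j) • ψ (r.right i) • (ℛ ℂ (r.left i)).right j := by
        refine Finset.sum_congr rfl fun i _ => ?_
        rw [lconv_repr φ (r.left i) (ℛ ℂ (r.left i)), Finset.smul_sum]
        simp [smul_smul, mul_comm]
    _ = ∑ i ∈ r.index, ∑ j ∈ (ℛ ℂ (r.right i)).index,
          φ (r.left i) • ψ ((ℛ ℂ (r.right i)).right j) • (ℛ ℂ (r.right i)).left j := hF
    _ = ∑ i ∈ r.index, φ (r.left i) • rconv ψ (r.right i) := by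
        refine Finset.sum_congr rfl fun i _ => ?_
        rw [rconv_repr ψ (r.right i) (ℛ ℂ (r.right i)), Finset.smul_sum]

lemma lconv_mem {J : Submodule ℂ H} (hJ : IsHopfIdeal J) (φ : H →ₗ[ℂ] ℂ)
    (hφ : ∀ x ∈ J, φ x = 0) {x : H} (hx : x ∈ J) : lconv φ x ∈ J := by
  obtain ⟨u, hu, v, hv, huv⟩ := Submodule.mem_sup.mp (hJ.comul_mem x hx)
  have hxe : lconv φ x = (TensorProduct.lid ℂ H)
      (TensorProduct.map φ LinearMap.id u) + (TensorProduct.lid ℂ H)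
      (TensorProduct.map φ LinearMap.id v) := by
    simp [lconv, ← huv]
  rw [hxe]
  obtain ⟨s, rfl⟩ := hu
  obtain ⟨t, rfl⟩ := hv
  clear hxe huv
  refine Submodule.add_mem J ?_ ?_
  · induction s using TensorProduct.induction_on with
    | zero => simp
    | tmul p q => simp [hφ p.1 p.2]
    | add p q hp hq => simp only [map_add]; exact Submodule.add_mem J hp hq
  · induction t using TensorProduct.induction_on with
    | zero => simp
    | tmul p q =>
        simp only [TensorProduct.map_tmul, TensorProduct.map_tmul, LinearMap.id_coe, id_eq,
          TensorProduct.lid_tmul]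
        exact Submodule.smul_mem J _ q.2
    | add p q hp hq => simp only [map_add]; exact Submodule.add_mem J hp hq

lemma rconv_mem {J : Submodule ℂ H} (hJ : IsHopfIdeal J) (ψ : H →ₗ[ℂ] ℂ)
    (hψ : ∀ x ∈ J, ψ x = 0) {x : H} (hx : x ∈ J) : rconv ψ x ∈ J := by
  obtain ⟨u, hu, v, hv, huv⟩ := Submodule.mem_sup.mp (hJ.comul_mem x hx)
  have hxe : rconv ψ x = (TensorProduct.rid ℂ H)
      (TensorProduct.map LinearMap.id ψ u) + (TensorProduct.rid ℂ H)
      (TensorProduct.map LinearMap.id ψ v) := by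
    simp [rconv, ← huv]
  rw [hxe]
  obtain ⟨s, rfl⟩ := hu
  obtain ⟨t, rfl⟩ := hv
  clear hxe huv
  refine Submodule.add_mem J ?_ ?_
  · induction s using TensorProduct.induction_on with
    | zero => simp
    | tmul p q =>
        simp only [TensorProduct.map_tmul, LinearMap.id_coe, id_eq, TensorProduct.rid_tmul]
        exact Submodule.smul_mem J _ p.2
    | add p q hp hq => simp only [map_add]; exact Submodule.add_mem J hp hq
  · induction t using TensorProduct.induction_on with
    | zero => simp
    | tmul p q => simp [hψ q.1 q.2]
    | add p q hp hq => simp only [map_add]; exact Submodule.add_mem J hp hq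

lemma myconv_antipode_eq_counit (Φ : H →ₐ[ℂ] ℂ) :
    ∀ x : H, myconv (Φ.toLinearMap ∘ₗ HopfAlgebra.antipode (R := ℂ)) Φ.toLinearMap x =
      Coalgebra.counit (R := ℂ) x := by
  intro x
  rw [myconv_repr _ _ x (ℛ ℂ x)]
  have h := HopfAlgebra.sum_antipode_mul_eq_algebraMap_counit (R := ℂ) (ℛ ℂ x)
  calc ∑ i ∈ (ℛ ℂ x).index,
        (Φ.toLinearMap ∘ₗ HopfAlgebra.antipode (R := ℂ)) ((ℛ ℂ x).left i) *
          Φ.toLinearMap ((ℛ ℂ x).right i)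
      = Φ (∑ i ∈ (ℛ ℂ x).index,
          HopfAlgebra.antipode (R := ℂ) ((ℛ ℂ x).left i) * ((ℛ ℂ x).right i)) := by
        rw [map_sum]; simp [map_mul]
    _ = Coalgebra.counit (R := ℂ) x := by rw [h]; simp [Algebra.algebraMap_eq_smul_one]

end MyAux

theorem stmt11 (H : Type*) [Ring H] [HopfAlgebra ℂ H]
    (a : H) (Φ : H →ₐ[ℂ] ℂ) (m : ℕ) (hm : 1 ≤ m) (ha : IsGroupLikeElemC a)
    (hreg : ∀ x : H, (⇑(HopfAlgebra.antipode (R := ℂ) (A := H)))^[2 * m] x =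
      a * convConj Φ x * HopfAlgebra.antipode (R := ℂ) a)
    (J : Submodule ℂ H) (hJ : IsHopfIdeal J)
    (hΦJ : ∀ x ∈ J, Φ x = 0)
    (hΦSJ : ∀ x ∈ J, Φ (HopfAlgebra.antipode (R := ℂ) x) = 0) :
    Submodule.map (HopfAlgebra.antipode (R := ℂ)) J = J := by
  have hconv : myconv (Φ.toLinearMap ∘ₗ HopfAlgebra.antipode (R := ℂ)) Φ.toLinearMap =
      Coalgebra.counit (R := ℂ) (A := H) := LinearMap.ext (myconv_antipode_eq_counit Φ)
  -- `a * S a = 1`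
  have haS : a * HopfAlgebra.antipode (R := ℂ) a = 1 := by
    have h := HopfAlgebra.mul_antipode_lTensor_comul_apply (R := ℂ) a
    rw [ha.1, ha.2] at h
    simpa using h
  -- antipode stability of J under iteration
  have hiter : ∀ (n : ℕ) (y : H), y ∈ J →
      (⇑(HopfAlgebra.antipode (R := ℂ) (A := H)))^[n] y ∈ J := by
    intro n
    induction n with
    | zero => intro y hy; simpa using hy
    | succ n ih =>
        intro y hy
        rw [Function.iterate_succ_apply]
        exact ih _ (hJ.antipode_mem y hy)
  apply le_antisymm
  · rintro _ ⟨x, hx, rfl⟩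
    exact hJ.antipode_mem x hx
  · intro x hx
    set S : H →ₗ[ℂ] H := HopfAlgebra.antipode (R := ℂ) with hS
    set z : H := HopfAlgebra.antipode (R := ℂ) a * x * a with hzdef
    have hz : z ∈ J := hJ.mul_mem_right a (hJ.mul_mem_left _ hx)
    set y : H := rconv Φ.toLinearMap (lconv (Φ.toLinearMap ∘ₗ
      HopfAlgebra.antipode (R := ℂ)) z) with hydef
    have hy : y ∈ J := by
      refine rconv_mem hJ _ hΦJ ?_
      exact lconv_mem hJ _ (fun w hw => hΦSJ w hw) hz
    -- `convConj Φ y = z`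
    have hcy : convConj Φ y = z := by
      have h1 : lconv Φ.toLinearMap y = rconv Φ.toLinearMap z := by
        rw [hydef, lconv_rconv, lconv_lconv, hconv, lconv_counit]
      calc convConj Φ y
          = rconv (Φ.toLinearMap ∘ₗ HopfAlgebra.antipode (R := ℂ))
              (lconv Φ.toLinearMap y) := rfl
        _ = rconv (Φ.toLinearMap ∘ₗ HopfAlgebra.antipode (R := ℂ))
              (rconv Φ.toLinearMap z) := by rw [h1]
        _ = rconv (myconv (Φ.toLinearMap ∘ₗ HopfAlgebra.antipode (R := ℂ))
              Φ.toLinearMap) z := rconv_rconv _ _ z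
        _ = z := by rw [hconv, rconv_counit]
    have h2m : (⇑(HopfAlgebra.antipode (R := ℂ) (A := H)))^[2 * m] y = x := by
      rw [hreg y, hcy, hzdef]
      calc a * (HopfAlgebra.antipode (R := ℂ) a * x * a) * HopfAlgebra.antipode (R := ℂ) a
          = (a * HopfAlgebra.antipode (R := ℂ) a) * x *
            (a * HopfAlgebra.antipode (R := ℂ) a) := by noncomm_ring
        _ = x := by rw [haS, one_mul, mul_one]
    have hmem : (⇑(HopfAlgebra.antipode (R := ℂ) (A := H)))^[2 * m - 1] y ∈ J :=
      hiter _ y hy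
    refine ⟨(⇑(HopfAlgebra.antipode (R := ℂ) (A := H)))^[2 * m - 1] y, hmem, ?_⟩
    have : HopfAlgebra.antipode (R := ℂ)
        ((⇑(HopfAlgebra.antipode (R := ℂ) (A := H)))^[2 * m - 1] y) =
        (⇑(HopfAlgebra.antipode (R := ℂ) (A := H)))^[2 * m] y := by
      rw [← Function.iterate_succ_apply' (⇑(HopfAlgebra.antipode (R := ℂ) (A := H)))]
      congr 1
      omega
    rw [this, h2m]
end
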